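/- arXiv:2309.04947 — 7 statements merged into one kernel-verified Lean document; each statement's English description precedes it below -/
import Mathlib

section
/- If a proper function β : ℝ² → ℝ ∪ {+∞} is submodular (i.e., β(a) + β(b) ≥ β(a ∨ b) + β(a ∧ b) for all a, b, where ∨ and ∧ denote componentwise max and min), then its convex conjugate β*(y) = sup_x (⟨x, y⟩ − β(x)) is supermodular. -/
open scoped BigOperators

/-- Convex conjugate of a function `β : ℝ × ℝ → EReal`. -/
noncomputable def convConj (β : ℝ × ℝ → EReal) (y : ℝ × ℝ) : EReal :=
  ⨆ x : ℝ × ℝ, ((x.1 * y.1 + x.2 * y.2 : ℝ) : EReal) - β x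

/-- Submodularity on ℝ × ℝ (componentwise lattice order). -/
def Submodular2 (f : ℝ × ℝ → EReal) : Prop :=
  ∀ a b : ℝ × ℝ, f (a ⊔ b) + f (a ⊓ b) ≤ f a + f b

/-- Supermodularity on ℝ × ℝ (componentwise lattice order). -/
def Supermodular2 (f : ℝ × ℝ → EReal) : Prop :=
  ∀ a b : ℝ × ℝ, f a + f b ≤ f (a ⊔ b) + f (a ⊓ b)

lemma scalar_key (x y p q : ℝ) :
    x * p + y * q ≤ max x y * max p q + min x y * min p q := by
  rcases le_total x y with h | h <;> rcases le_total p q with h' | h' <;>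
    simp [max_eq_left, max_eq_right, min_eq_left, min_eq_right, h, h'] <;> nlinarith

lemma pair_key (x y a b : ℝ × ℝ) :
    x.1 * a.1 + x.2 * a.2 + (y.1 * b.1 + y.2 * b.2) ≤
      ((x ⊔ y).1 * (a ⊔ b).1 + (x ⊔ y).2 * (a ⊔ b).2) +
      ((x ⊓ y).1 * (a ⊓ b).1 + (x ⊓ y).2 * (a ⊓ b).2) := by
  have h1 := scalar_key x.1 y.1 a.1 b.1
  have h2 := scalar_key x.2 y.2 a.2 b.2
  simp only [Prod.fst_sup, Prod.snd_sup, Prod.fst_inf, Prod.snd_inf]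
  linarith

lemma pointwise_key (β : ℝ × ℝ → EReal) (hproper₁ : ∀ x, β x ≠ ⊥)
    (hsub : Submodular2 β) (a b x y : ℝ × ℝ) :
    (((x.1 * a.1 + x.2 * a.2 : ℝ) : EReal) - β x) +
      (((y.1 * b.1 + y.2 * b.2 : ℝ) : EReal) - β y) ≤
    ((((x ⊔ y).1 * (a ⊔ b).1 + (x ⊔ y).2 * (a ⊔ b).2 : ℝ) : EReal) - β (x ⊔ y)) +
      ((((x ⊓ y).1 * (a ⊓ b).1 + (x ⊓ y).2 * (a ⊓ b).2 : ℝ) : EReal) - β (x ⊓ y)) := by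
  have hsub' := hsub x y
  by_cases hx : β x = ⊤
  · simp [hx, EReal.sub_top]
  by_cases hy : β y = ⊤
  · simp [hy, EReal.sub_top]
  -- β x, β y are real
  lift β x to ℝ using ⟨hx, hproper₁ x⟩ with bx hbx
  lift β y to ℝ using ⟨hy, hproper₁ y⟩ with by' hby
  have hu : β (x ⊔ y) ≠ ⊤ := by
    intro h
    rw [h] at hsub'
    have : (⊤ : EReal) + β (x ⊓ y) = ⊤ := by
      rw [EReal.top_add_of_ne_bot (hproper₁ _)]
    rw [this] at hsub'
    exact absurd (top_le_iff.mp hsub') (by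
      rw [← EReal.coe_add]; exact EReal.coe_ne_top _)
  have hv : β (x ⊓ y) ≠ ⊤ := by
    intro h
    rw [h] at hsub'
    have : β (x ⊔ y) + (⊤ : EReal) = ⊤ := by
      rw [EReal.add_top_of_ne_bot (hproper₁ _)]
    rw [this] at hsub'
    exact absurd (top_le_iff.mp hsub') (by
      rw [← EReal.coe_add]; exact EReal.coe_ne_top _)
  lift β (x ⊔ y) to ℝ using ⟨hu, hproper₁ _⟩ with bu hbu
  lift β (x ⊓ y) to ℝ using ⟨hv, hproper₁ _⟩ with bv hbv
  have hsubR : bu + bv ≤ bx + by' := by exact_mod_cast hsub'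
  have hpair := pair_key x y a b
  rw [← EReal.coe_sub, ← EReal.coe_sub, ← EReal.coe_sub, ← EReal.coe_sub,
    ← EReal.coe_add, ← EReal.coe_add, EReal.coe_le_coe_iff]
  linarith

theorem submodular_convConj_supermodular (β : ℝ × ℝ → EReal)
    (hproper₁ : ∀ x, β x ≠ ⊥) (hproper₂ : ∃ x, β x ≠ ⊤)
    (hsub : Submodular2 β) : Supermodular2 (convConj β) := by
  intro a b
  apply EReal.add_le_of_forall_lt
  intro a' ha' b' hb'
  rw [convConj, lt_iSup_iff] at ha' hb'
  obtain ⟨x, hx⟩ := ha'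
  obtain ⟨y, hy⟩ := hb'
  calc a' + b' ≤ (((x.1 * a.1 + x.2 * a.2 : ℝ) : EReal) - β x) +
        (((y.1 * b.1 + y.2 * b.2 : ℝ) : EReal) - β y) := add_le_add hx.le hy.le
    _ ≤ ((((x ⊔ y).1 * (a ⊔ b).1 + (x ⊔ y).2 * (a ⊔ b).2 : ℝ) : EReal) - β (x ⊔ y)) +
        ((((x ⊓ y).1 * (a ⊓ b).1 + (x ⊓ y).2 * (a ⊓ b).2 : ℝ) : EReal) - β (x ⊓ y)) :=
      pointwise_key β hproper₁ hsub a b x y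
    _ ≤ convConj β (a ⊔ b) + convConj β (a ⊓ b) :=
      add_le_add (le_iSup (fun z : ℝ × ℝ => ((z.1 * (a ⊔ b).1 + z.2 * (a ⊔ b).2 : ℝ) : EReal) - β z) (x ⊔ y)) (le_iSup (fun z : ℝ × ℝ => ((z.1 * (a ⊓ b).1 + z.2 * (a ⊓ b).2 : ℝ) : EReal) - β z) (x ⊓ y))
end

section
/- If a proper function β : ℝ² → ℝ ∪ {+∞} is supermodular, then its convex conjugate β* is submodular. -/
private lemma super_key (β : ℝ × ℝ → EReal) (hsup : Supermodular2 β) (a b x y : ℝ × ℝ) :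
    ∃ z w : ℝ × ℝ,
      β z + β w ≤ β x + β y ∧
      x.1 * (a ⊔ b).1 + x.2 * (a ⊔ b).2 + (y.1 * (a ⊓ b).1 + y.2 * (a ⊓ b).2) ≤
        z.1 * a.1 + z.2 * a.2 + (w.1 * b.1 + w.2 * b.2) := by
  have hfs : (a ⊔ b).1 = max a.1 b.1 := by simp [Prod.fst_sup]
  have hss : (a ⊔ b).2 = max a.2 b.2 := by simp [Prod.snd_sup]
  have hfi : (a ⊓ b).1 = min a.1 b.1 := by simp [Prod.fst_inf]
  have hsi : (a ⊓ b).2 = min a.2 b.2 := by simp [Prod.snd_inf]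
  have mix : ∀ z w : ℝ × ℝ, (z ⊔ w = x ∧ z ⊓ w = y) ∨ (z ⊔ w = y ∧ z ⊓ w = x) →
      β z + β w ≤ β x + β y := by
    rintro z w (⟨e1, e2⟩ | ⟨e1, e2⟩)
    · have h := hsup z w; rw [e1, e2] at h; exact h
    · have h := hsup z w; rw [e1, e2] at h; exact h.trans (add_comm (β y) (β x)).le
  rw [hfs, hss, hfi, hsi]
  rcases le_total b.1 a.1 with h1 | h1 <;> rcases le_total b.2 a.2 with h2 | h2 <;>
    rcases le_total y.1 x.1 with t1 | t1 <;> rcases le_total y.2 x.2 with t2 | t2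
  -- b ≤ a (both coords): pair (x, y)
  · refine ⟨x, y, le_refl _, ?_⟩
    rw [max_eq_left h1, max_eq_left h2, min_eq_right h1, min_eq_right h2]
  · refine ⟨x, y, le_refl _, ?_⟩
    rw [max_eq_left h1, max_eq_left h2, min_eq_right h1, min_eq_right h2]
  · refine ⟨x, y, le_refl _, ?_⟩
    rw [max_eq_left h1, max_eq_left h2, min_eq_right h1, min_eq_right h2]
  · refine ⟨x, y, le_refl _, ?_⟩
    rw [max_eq_left h1, max_eq_left h2, min_eq_right h1, min_eq_right h2]
  -- b.1 ≤ a.1, a.2 ≤ b.2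
  · refine ⟨(x.1, y.2), (y.1, x.2), mix _ _ (Or.inl ⟨?_, ?_⟩), ?_⟩
    · ext <;> simp [Prod.mk_sup_mk, max_eq_left t1, max_eq_right t2]
    · ext <;> simp [Prod.mk_inf_mk, min_eq_right t1, min_eq_left t2]
    · rw [max_eq_left h1, max_eq_right h2, min_eq_right h1, min_eq_left h2]
      dsimp only; exact le_of_eq (by ring)
  · refine ⟨x, y, le_refl _, ?_⟩
    rw [max_eq_left h1, max_eq_right h2, min_eq_right h1, min_eq_left h2]
    nlinarith [mul_nonneg (sub_nonneg.2 t2) (sub_nonneg.2 h2)]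
  · refine ⟨y, x, (add_comm (β y) (β x)).le, ?_⟩
    rw [max_eq_left h1, max_eq_right h2, min_eq_right h1, min_eq_left h2]
    nlinarith [mul_nonneg (sub_nonneg.2 t1) (sub_nonneg.2 h1)]
  · refine ⟨(x.1, y.2), (y.1, x.2), mix _ _ (Or.inr ⟨?_, ?_⟩), ?_⟩
    · ext <;> simp [Prod.mk_sup_mk, max_eq_right t1, max_eq_left t2]
    · ext <;> simp [Prod.mk_inf_mk, min_eq_left t1, min_eq_right t2]
    · rw [max_eq_left h1, max_eq_right h2, min_eq_right h1, min_eq_left h2]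
      dsimp only; exact le_of_eq (by ring)
  -- a.1 ≤ b.1, b.2 ≤ a.2
  · refine ⟨(y.1, x.2), (x.1, y.2), mix _ _ (Or.inl ⟨?_, ?_⟩), ?_⟩
    · ext <;> simp [Prod.mk_sup_mk, max_eq_right t1, max_eq_left t2]
    · ext <;> simp [Prod.mk_inf_mk, min_eq_left t1, min_eq_right t2]
    · rw [max_eq_right h1, max_eq_left h2, min_eq_left h1, min_eq_right h2]
      dsimp only; exact le_of_eq (by ring)
  · refine ⟨y, x, (add_comm (β y) (β x)).le, ?_⟩
    rw [max_eq_right h1, max_eq_left h2, min_eq_left h1, min_eq_right h2]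
    nlinarith [mul_nonneg (sub_nonneg.2 t2) (sub_nonneg.2 h2)]
  · refine ⟨x, y, le_refl _, ?_⟩
    rw [max_eq_right h1, max_eq_left h2, min_eq_left h1, min_eq_right h2]
    nlinarith [mul_nonneg (sub_nonneg.2 t1) (sub_nonneg.2 h1)]
  · refine ⟨(y.1, x.2), (x.1, y.2), mix _ _ (Or.inr ⟨?_, ?_⟩), ?_⟩
    · ext <;> simp [Prod.mk_sup_mk, max_eq_left t1, max_eq_right t2]
    · ext <;> simp [Prod.mk_inf_mk, min_eq_right t1, min_eq_left t2]
    · rw [max_eq_right h1, max_eq_left h2, min_eq_left h1, min_eq_right h2]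
      dsimp only; exact le_of_eq (by ring)
  -- a ≤ b (both coords): pair (y, x)
  · refine ⟨y, x, (add_comm (β y) (β x)).le, ?_⟩
    rw [max_eq_right h1, max_eq_right h2, min_eq_left h1, min_eq_left h2]; linarith
  · refine ⟨y, x, (add_comm (β y) (β x)).le, ?_⟩
    rw [max_eq_right h1, max_eq_right h2, min_eq_left h1, min_eq_left h2]; linarith
  · refine ⟨y, x, (add_comm (β y) (β x)).le, ?_⟩
    rw [max_eq_right h1, max_eq_right h2, min_eq_left h1, min_eq_left h2]; linarith
  · refine ⟨y, x, (add_comm (β y) (β x)).le, ?_⟩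
    rw [max_eq_right h1, max_eq_right h2, min_eq_left h1, min_eq_left h2]; linarith

theorem supermodular_convConj_submodular (β : ℝ × ℝ → EReal)
    (hproper₁ : ∀ x, β x ≠ ⊥) (hproper₂ : ∃ x, β x ≠ ⊤)
    (hsup : Supermodular2 β) : Submodular2 (convConj β) := by
  intro a b
  have key : ∀ x y : ℝ × ℝ,
      (((x.1 * (a ⊔ b).1 + x.2 * (a ⊔ b).2 : ℝ) : EReal) - β x) +
        (((y.1 * (a ⊓ b).1 + y.2 * (a ⊓ b).2 : ℝ) : EReal) - β y) ≤
      convConj β a + convConj β b := by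
    intro x y
    by_cases hx : β x = ⊤
    · simp [hx, EReal.sub_top]
    by_cases hy : β y = ⊤
    · simp [hy, EReal.sub_top]
    obtain ⟨bx, hbx⟩ : ∃ r : ℝ, β x = (r : EReal) := ⟨(β x).toReal,
      (EReal.coe_toReal hx (hproper₁ x)).symm⟩
    obtain ⟨by', hby⟩ : ∃ r : ℝ, β y = (r : EReal) := ⟨(β y).toReal,
      (EReal.coe_toReal hy (hproper₁ y)).symm⟩
    obtain ⟨z, w, hβ, hlin⟩ := super_key β hsup a b x y
    rw [hbx, hby, ← EReal.coe_add] at hβ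
    have hzt : β z ≠ ⊤ := by
      intro h
      rw [h, EReal.top_add_of_ne_bot (hproper₁ w)] at hβ
      exact (EReal.coe_lt_top (bx + by')).not_ge hβ
    have hwt : β w ≠ ⊤ := by
      intro h
      rw [h, EReal.add_top_of_ne_bot (hproper₁ z)] at hβ
      exact (EReal.coe_lt_top (bx + by')).not_ge hβ
    obtain ⟨cz, hcz⟩ : ∃ r : ℝ, β z = (r : EReal) := ⟨(β z).toReal,
      (EReal.coe_toReal hzt (hproper₁ z)).symm⟩
    obtain ⟨cw, hcw⟩ : ∃ r : ℝ, β w = (r : EReal) := ⟨(β w).toReal,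
      (EReal.coe_toReal hwt (hproper₁ w)).symm⟩
    rw [hcz, hcw, ← EReal.coe_add] at hβ
    have hβ' : cz + cw ≤ bx + by' := by exact_mod_cast hβ
    have step1 : (((x.1 * (a ⊔ b).1 + x.2 * (a ⊔ b).2 : ℝ) : EReal) - β x) +
        (((y.1 * (a ⊓ b).1 + y.2 * (a ⊓ b).2 : ℝ) : EReal) - β y) ≤
        (((z.1 * a.1 + z.2 * a.2 : ℝ) : EReal) - β z) +
        (((w.1 * b.1 + w.2 * b.2 : ℝ) : EReal) - β w) := by
      rw [hbx, hby, hcz, hcw]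
      rw [← EReal.coe_sub, ← EReal.coe_sub, ← EReal.coe_sub, ← EReal.coe_sub,
        ← EReal.coe_add, ← EReal.coe_add, EReal.coe_le_coe_iff]
      linarith
    refine step1.trans (add_le_add ?_ ?_)
    · exact le_iSup (fun z : ℝ × ℝ => ((z.1 * a.1 + z.2 * a.2 : ℝ) : EReal) - β z) z
    · exact le_iSup (fun w : ℝ × ℝ => ((w.1 * b.1 + w.2 * b.2 : ℝ) : EReal) - β w) w
  refine EReal.add_le_of_forall_lt (fun u hu v hv => ?_)
  rw [convConj] at hu hv
  obtain ⟨x, hx⟩ := lt_iSup_iff.1 hu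
  obtain ⟨y, hy⟩ := lt_iSup_iff.1 hv
  exact (add_le_add hx.le hy.le).trans (key x y)
end

section
/- If a proper function β : ℝ² → ℝ ∪ {+∞} is submodular, then its convex envelope β** (the biconjugate) is also submodular; likewise, if β is supermodular then β** is supermodular. -/
/-- The convex envelope (biconjugate) of `β`. -/
noncomputable def convEnvelope (β : ℝ × ℝ → EReal) : ℝ × ℝ → EReal :=
  convConj (convConj β)

/-- Key EReal arithmetic lemma. -/
lemma ereal_key {c₁ c₂ d₁ d₂ : ℝ} {u v w t : EReal}
    (hc : c₁ + c₂ ≤ d₁ + d₂) (hβ : w + t ≤ u + v)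
    (hu : u ≠ ⊥) (hv : v ≠ ⊥) (hw : w ≠ ⊥) (ht : t ≠ ⊥) :
    ((c₁ : EReal) - u) + ((c₂ : EReal) - v) ≤ ((d₁ : EReal) - w) + ((d₂ : EReal) - t) := by
  by_cases hut : u = ⊤
  · simp [hut, EReal.sub_top, EReal.bot_add]
  by_cases hvt : v = ⊤
  · simp [hvt, EReal.sub_top, EReal.add_bot]
  lift u to ℝ using ⟨hut, hu⟩
  lift v to ℝ using ⟨hvt, hv⟩
  have hwt : w ≠ ⊤ := by
    rintro rfl
    rw [EReal.top_add_of_ne_bot ht, ← EReal.coe_add] at hβ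
    exact EReal.coe_ne_top _ (top_le_iff.mp hβ)
  have htt : t ≠ ⊤ := by
    rintro rfl
    rw [EReal.add_top_of_ne_bot hw, ← EReal.coe_add] at hβ
    exact EReal.coe_ne_top _ (top_le_iff.mp hβ)
  lift w to ℝ using ⟨hwt, hw⟩
  lift t to ℝ using ⟨htt, ht⟩
  rw [← EReal.coe_add, ← EReal.coe_add, EReal.coe_le_coe_iff] at hβ
  rw [← EReal.coe_sub, ← EReal.coe_sub, ← EReal.coe_sub, ← EReal.coe_sub,
    ← EReal.coe_add, ← EReal.coe_add, EReal.coe_le_coe_iff]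
  linarith

/-- Rearrangement inequality for two reals. -/
lemma rearr (s t u v : ℝ) : u * s + v * t ≤ (u ⊔ v) * (s ⊔ t) + (u ⊓ v) * (s ⊓ t) := by
  rcases le_total u v with h | h <;> rcases le_total s t with h' | h' <;>
    simp only [max_eq_right, max_eq_left, min_eq_left, min_eq_right,
      h, h'] <;> nlinarith

lemma inner_rearr (x z a b : ℝ × ℝ) :
    (x.1 * a.1 + x.2 * a.2) + (z.1 * b.1 + z.2 * b.2) ≤
      ((x ⊔ z).1 * (a ⊔ b).1 + (x ⊔ z).2 * (a ⊔ b).2) +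
      ((x ⊓ z).1 * (a ⊓ b).1 + (x ⊓ z).2 * (a ⊓ b).2) := by
  have h1 := rearr a.1 b.1 x.1 z.1
  have h2 := rearr a.2 b.2 x.2 z.2
  simp only [Prod.sup_def, Prod.inf_def]
  linarith

/-- The conjugate of a submodular function (nowhere `⊥`) is supermodular. -/
lemma conj_super (f : ℝ × ℝ → EReal) (hb : ∀ x, f x ≠ ⊥) (h : Submodular2 f) :
    Supermodular2 (convConj f) := by
  intro a b
  refine EReal.add_le_of_forall_lt fun p hp q hq => ?_
  rw [convConj, lt_iSup_iff] at hp hq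
  obtain ⟨x, hx⟩ := hp
  obtain ⟨z, hz⟩ := hq
  calc p + q ≤ (((x.1 * a.1 + x.2 * a.2 : ℝ) : EReal) - f x)
        + (((z.1 * b.1 + z.2 * b.2 : ℝ) : EReal) - f z) := add_le_add hx.le hz.le
    _ ≤ ((((x ⊔ z).1 * (a ⊔ b).1 + (x ⊔ z).2 * (a ⊔ b).2 : ℝ) : EReal) - f (x ⊔ z))
        + ((((x ⊓ z).1 * (a ⊓ b).1 + (x ⊓ z).2 * (a ⊓ b).2 : ℝ) : EReal) - f (x ⊓ z)) :=
      ereal_key (inner_rearr x z a b) (h x z) (hb x) (hb z) (hb _) (hb _)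
    _ ≤ convConj f (a ⊔ b) + convConj f (a ⊓ b) :=
      add_le_add (le_iSup (fun x => ((x.1 * (a ⊔ b).1 + x.2 * (a ⊔ b).2 : ℝ) : EReal) - f x) (x ⊔ z))
        (le_iSup (fun x => ((x.1 * (a ⊓ b).1 + x.2 * (a ⊓ b).2 : ℝ) : EReal) - f x) (x ⊓ z))

/-- Cross inequality from submodularity. -/
lemma cross_of_sub {f : ℝ × ℝ → EReal} (h : Submodular2 f) (p q : ℝ × ℝ) :
    f p + f q ≤ f (p.1 ⊔ q.1, p.2 ⊓ q.2) + f (p.1 ⊓ q.1, p.2 ⊔ q.2) := by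
  obtain ⟨p1, p2⟩ := p
  obtain ⟨q1, q2⟩ := q
  dsimp only
  rcases le_total p1 q1 with h1 | h1 <;> rcases le_total p2 q2 with h2 | h2
  · rw [sup_eq_right.mpr h1, inf_eq_left.mpr h2, inf_eq_left.mpr h1, sup_eq_right.mpr h2]
    have key := h (q1, p2) (p1, q2)
    rw [Prod.sup_def, Prod.inf_def] at key
    dsimp only at key
    rw [sup_eq_left.mpr h1, sup_eq_right.mpr h2, inf_eq_right.mpr h1, inf_eq_left.mpr h2] at key
    exact (add_comm (f (p1, p2)) (f (q1, q2))).trans_le key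
  · rw [sup_eq_right.mpr h1, inf_eq_right.mpr h2, inf_eq_left.mpr h1, sup_eq_left.mpr h2]
    exact (add_comm (f (p1, p2)) (f (q1, q2))).le
  · rw [sup_eq_left.mpr h1, inf_eq_left.mpr h2, inf_eq_right.mpr h1, sup_eq_right.mpr h2]
  · rw [sup_eq_left.mpr h1, inf_eq_right.mpr h2, inf_eq_right.mpr h1, sup_eq_left.mpr h2]
    have key := h (p1, q2) (q1, p2)
    rw [Prod.sup_def, Prod.inf_def] at key
    dsimp only at key
    rw [sup_eq_left.mpr h1, sup_eq_right.mpr h2, inf_eq_right.mpr h1, inf_eq_left.mpr h2] at key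
    exact key

/-- Cross inequality from supermodularity. -/
lemma cross_of_super {f : ℝ × ℝ → EReal} (h : Supermodular2 f) (p q : ℝ × ℝ) :
    f (p.1 ⊔ q.1, p.2 ⊓ q.2) + f (p.1 ⊓ q.1, p.2 ⊔ q.2) ≤ f p + f q := by
  obtain ⟨p1, p2⟩ := p
  obtain ⟨q1, q2⟩ := q
  dsimp only
  rcases le_total p1 q1 with h1 | h1 <;> rcases le_total p2 q2 with h2 | h2
  · rw [sup_eq_right.mpr h1, inf_eq_left.mpr h2, inf_eq_left.mpr h1, sup_eq_right.mpr h2]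
    have key := h (q1, p2) (p1, q2)
    rw [Prod.sup_def, Prod.inf_def] at key
    dsimp only at key
    rw [sup_eq_left.mpr h1, sup_eq_right.mpr h2, inf_eq_right.mpr h1, inf_eq_left.mpr h2] at key
    exact key.trans_eq (add_comm (f (q1, q2)) (f (p1, p2)))
  · rw [sup_eq_right.mpr h1, inf_eq_right.mpr h2, inf_eq_left.mpr h1, sup_eq_left.mpr h2]
    exact (add_comm (f (q1, q2)) (f (p1, p2))).le
  · rw [sup_eq_left.mpr h1, inf_eq_left.mpr h2, inf_eq_right.mpr h1, sup_eq_right.mpr h2]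
  · rw [sup_eq_left.mpr h1, inf_eq_right.mpr h2, inf_eq_right.mpr h1, sup_eq_left.mpr h2]
    have key := h (p1, q2) (q1, p2)
    rw [Prod.sup_def, Prod.inf_def] at key
    dsimp only at key
    rw [sup_eq_left.mpr h1, sup_eq_right.mpr h2, inf_eq_right.mpr h1, inf_eq_left.mpr h2] at key
    exact key

lemma flip_super_of_sub {f : ℝ × ℝ → EReal} (h : Submodular2 f) :
    Supermodular2 (fun x => f (x.1, -x.2)) := by
  intro a b
  have := cross_of_sub h (a.1, -a.2) (b.1, -b.2)
  simpa [Prod.sup_def, Prod.inf_def, min_neg_neg, max_neg_neg] using this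

lemma flip_sub_of_super {f : ℝ × ℝ → EReal} (h : Supermodular2 f) :
    Submodular2 (fun x => f (x.1, -x.2)) := by
  intro a b
  have := cross_of_super h (a.1, -a.2) (b.1, -b.2)
  simpa [Prod.sup_def, Prod.inf_def, min_neg_neg, max_neg_neg] using this

lemma convConj_flip (f : ℝ × ℝ → EReal) (y : ℝ × ℝ) :
    convConj (fun x => f (x.1, -x.2)) y = convConj f (y.1, -y.2) := by
  unfold convConj
  apply le_antisymm
  · refine iSup_le fun x => ?_
    have hr : (x.1 * y.1 + x.2 * y.2 : ℝ) = x.1 * y.1 + (-x.2) * -y.2 := by ring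
    calc ((x.1 * y.1 + x.2 * y.2 : ℝ) : EReal) - f (x.1, -x.2)
        = ((x.1 * y.1 + (-x.2) * -y.2 : ℝ) : EReal) - f (x.1, -x.2) := by rw [hr]
      _ ≤ ⨆ u : ℝ × ℝ, ((u.1 * y.1 + u.2 * -y.2 : ℝ) : EReal) - f u :=
        le_iSup (fun u : ℝ × ℝ => ((u.1 * y.1 + u.2 * -y.2 : ℝ) : EReal) - f u) (x.1, -x.2)
  · refine iSup_le fun x => ?_
    have hr : (x.1 * y.1 + x.2 * -y.2 : ℝ) = x.1 * y.1 + (-x.2) * y.2 := by ring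
    have hx : f x = f ((x.1, -x.2).1, -(x.1, -x.2).2) := by simp
    calc ((x.1 * y.1 + x.2 * -y.2 : ℝ) : EReal) - f x
        = ((x.1 * y.1 + (-x.2) * y.2 : ℝ) : EReal) - f ((x.1, -x.2).1, -(x.1, -x.2).2) := by
          rw [hr, ← hx]
      _ ≤ ⨆ u : ℝ × ℝ, ((u.1 * y.1 + u.2 * y.2 : ℝ) : EReal) - f (u.1, -u.2) :=
        le_iSup (fun u : ℝ × ℝ => ((u.1 * y.1 + u.2 * y.2 : ℝ) : EReal) - f (u.1, -u.2)) (x.1, -x.2)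

/-- The conjugate of a supermodular function (nowhere `⊥`) is submodular. -/
lemma conj_sub (f : ℝ × ℝ → EReal) (hb : ∀ x, f x ≠ ⊥) (h : Supermodular2 f) :
    Submodular2 (convConj f) := by
  have h1 : Supermodular2 (convConj (fun x => f (x.1, -x.2))) :=
    conj_super _ (fun x => hb _) (flip_sub_of_super h)
  have h2 : Supermodular2 (fun y : ℝ × ℝ => convConj f (y.1, -y.2)) := by
    have : (fun y : ℝ × ℝ => convConj f (y.1, -y.2))
        = convConj (fun x => f (x.1, -x.2)) := funext fun y => (convConj_flip f y).symm
    rw [this]; exact h1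
  have h3 := flip_sub_of_super h2
  simpa using h3

lemma conj_ne_bot (β : ℝ × ℝ → EReal) (h₁ : ∀ x, β x ≠ ⊥) (h₂ : ∃ x, β x ≠ ⊤) :
    ∀ y, convConj β y ≠ ⊥ := by
  intro y
  obtain ⟨x₀, hx₀⟩ := h₂
  have hle : ((x₀.1 * y.1 + x₀.2 * y.2 : ℝ) : EReal) - β x₀ ≤ convConj β y :=
    le_iSup (fun x => ((x.1 * y.1 + x.2 * y.2 : ℝ) : EReal) - β x) x₀
  lift β x₀ to ℝ using ⟨hx₀, h₁ x₀⟩ with r hr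
  rw [← EReal.coe_sub] at hle
  exact ((EReal.bot_lt_coe _).trans_le hle).ne'

theorem convEnvelope_modularity (β : ℝ × ℝ → EReal)
    (hproper₁ : ∀ x, β x ≠ ⊥) (hproper₂ : ∃ x, β x ≠ ⊤) :
    (Submodular2 β → Submodular2 (convEnvelope β)) ∧
    (Supermodular2 β → Supermodular2 (convEnvelope β)) := by
  constructor
  · intro hsub
    exact conj_sub _ (conj_ne_bot β hproper₁ hproper₂) (conj_super β hproper₁ hsub)
  · intro hsup
    exact conj_super _ (conj_ne_bot β hproper₁ hproper₂) (conj_sub β hproper₁ hsup)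
end

section
/- There exists a symmetric positive-definite 3×3 matrix A with all entries nonnegative (so that β(x) = ½ x·Ax is supermodular) such that A⁻¹ has a strictly positive off-diagonal entry; consequently, the convex conjugate β*(z) = ½ z·A⁻¹z is not submodular. Hence the conjugate of a supermodular function on ℝ³ need not be submodular. -/
open scoped BigOperators
open Matrix

/-- The quadratic form ½ x · M x associated to a matrix M. -/
noncomputable def quadForm (M : Matrix (Fin 3) (Fin 3) ℝ) (x : Fin 3 → ℝ) : ℝ :=
  (1 / 2) * ∑ i : Fin 3, ∑ j : Fin 3, x i * M i j * x j

noncomputable def Amat : Matrix (Fin 3) (Fin 3) ℝ := !![2,1,1;1,2,0;1,0,2]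
noncomputable def Bmat : Matrix (Fin 3) (Fin 3) ℝ :=
  !![1,-1/2,-1/2;-1/2,3/4,1/4;-1/2,1/4,3/4]

lemma Amat_inv : Amat⁻¹ = Bmat := by
  apply Matrix.inv_eq_right_inv
  ext i j
  fin_cases i <;> fin_cases j <;>
    simp [Amat, Bmat, Matrix.mul_apply, Fin.sum_univ_three, Matrix.cons_val_succ, Matrix.vecHead, Matrix.vecTail, Matrix.one_apply, Fin.ext_iff] <;> norm_num

theorem exists_posDef_supermodular_conj_not_submodular :
    ∃ A : Matrix (Fin 3) (Fin 3) ℝ,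
      A.IsSymm ∧ A.PosDef ∧ (∀ i j, 0 ≤ A i j) ∧
      (∃ i j : Fin 3, i ≠ j ∧ 0 < A⁻¹ i j) ∧
      -- the conjugate β*(z) = ½ z · A⁻¹ z is not submodular
      ¬ (∀ a b : Fin 3 → ℝ,
          quadForm A⁻¹ (a ⊔ b) + quadForm A⁻¹ (a ⊓ b) ≤
            quadForm A⁻¹ a + quadForm A⁻¹ b) := by
  refine ⟨Amat, ?_, ?_, ?_, ?_, ?_⟩
  · ext i j
    fin_cases i <;> fin_cases j <;> simp [Amat, Matrix.cons_val_succ, Matrix.vecHead, Matrix.vecTail]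
  · apply Matrix.PosDef.of_dotProduct_mulVec_pos
    · ext i j
      fin_cases i <;> fin_cases j <;> simp [Amat, Matrix.cons_val_succ, Matrix.vecHead, Matrix.vecTail]
    · intro x hx
      have h : x ⬝ᵥ Amat.mulVec x =
          (x 0 + x 1)^2 + (x 0 + x 2)^2 + (x 1)^2 + (x 2)^2 := by
        simp [Amat, dotProduct, Matrix.mulVec, Fin.sum_univ_three, Matrix.cons_val_succ, Matrix.vecHead, Matrix.vecTail]
        ring
      have hne : x 0 ≠ 0 ∨ x 1 ≠ 0 ∨ x 2 ≠ 0 := by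
        by_contra hc
        push_neg at hc
        apply hx
        ext i
        fin_cases i <;> simp [hc.1, hc.2.1, hc.2.2]
      simp only [star_trivial]
      rw [h]
      rcases hne with h0 | h1 | h2
      · rcases eq_or_ne (x 1) 0 with h1 | h1
        · nlinarith [sq_nonneg (x 0 + x 2), sq_nonneg (x 2), sq_nonneg (x 0 + x 1), sq_abs (x 0), sq_pos_of_ne_zero h0]
        · nlinarith [sq_nonneg (x 0 + x 1), sq_nonneg (x 0 + x 2), sq_nonneg (x 2), sq_pos_of_ne_zero h1]
      · nlinarith [sq_nonneg (x 0 + x 1), sq_nonneg (x 0 + x 2), sq_nonneg (x 2), sq_pos_of_ne_zero h1]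
      · nlinarith [sq_nonneg (x 0 + x 1), sq_nonneg (x 0 + x 2), sq_nonneg (x 1), sq_pos_of_ne_zero h2]
  · intro i j
    fin_cases i <;> fin_cases j <;> norm_num [Amat, Matrix.cons_val_succ, Matrix.vecHead, Matrix.vecTail]
  · refine ⟨1, 2, by decide, ?_⟩
    rw [Amat_inv]
    norm_num [Bmat, Matrix.cons_val_zero, Matrix.cons_val_one, Matrix.cons_val_two, Matrix.cons_val_succ, Matrix.vecHead, Matrix.vecTail]
  · intro h
    have hsup : (![0,1,0] : Fin 3 → ℝ) ⊔ ![0,0,1] = ![0,1,1] := by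
      ext i
      fin_cases i <;> simp
    have hinf : (![0,1,0] : Fin 3 → ℝ) ⊓ ![0,0,1] = ![0,0,0] := by
      ext i
      fin_cases i <;> simp
    have := h ![0,1,0] ![0,0,1]
    rw [Amat_inv, hsup, hinf] at this
    simp only [quadForm, Fin.sum_univ_three] at this
    norm_num [Bmat, Matrix.cons_val_zero, Matrix.cons_val_one, Matrix.cons_val_two, Matrix.cons_val_succ, Matrix.vecHead, Matrix.vecTail] at this
end

section
/- Let μ₁ = μ₂ be the uniform probability measure on [−1, 1], ν₁ the uniform probability measure on [−3, 3], and ν₂ the uniform probability measure on [−2, 2]. Then μ_i ≼_c ν_i in convex order for i = 1, 2, but the monotone coupling χ_μ of (μ₁, μ₂) and the monotone coupling χ_ν of (ν₁, ν₂) are not in convex order: there is a convex function f on ℝ² with ∫ f dχ_μ > ∫ f dχ_ν. -/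
open MeasureTheory

/-- Uniform probability measure on the interval [a, b]. -/
noncomputable def unifIcc (a b : ℝ) : Measure ℝ :=
  (volume (Set.Icc a b))⁻¹ • volume.restrict (Set.Icc a b)

/-- Convex order of measures on ℝ. -/
def ConvexOrder1 (μ ν : Measure ℝ) : Prop :=
  ∀ f : ℝ → ℝ, ConvexOn ℝ Set.univ f → ∫ x, f x ∂μ ≤ ∫ x, f x ∂ν

lemma convex_pair {f : ℝ → ℝ} (hf : ConvexOn ℝ Set.univ f) {c : ℝ} (hc : 1 ≤ c) (t : ℝ) :
    f t + f (-t) ≤ f (c * t) + f (-(c * t)) := by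
  have hc0 : (0:ℝ) < c := lt_of_lt_of_le one_pos hc
  set l : ℝ := (1 + c) / (2 * c) with hl
  have hl0 : 0 ≤ l := by positivity
  have hl1 : l ≤ 1 := by rw [hl, div_le_one (by positivity)]; linarith
  have e1 : l * (c * t) + (1 - l) * (-(c * t)) = t := by
    rw [hl]; field_simp; ring
  have e2 : (1 - l) * (c * t) + l * (-(c * t)) = -t := by
    rw [hl]; field_simp; ring
  have h1 := hf.2 (Set.mem_univ (c * t)) (Set.mem_univ (-(c * t))) hl0 (by linarith)
    (by ring : l + (1 - l) = 1)
  have h2 := hf.2 (Set.mem_univ (c * t)) (Set.mem_univ (-(c * t))) (by linarith : (0:ℝ) ≤ 1 - l)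
    hl0 (by ring : (1 - l) + l = 1)
  simp only [smul_eq_mul] at h1 h2
  rw [e1] at h1
  rw [e2] at h2
  linarith

lemma interval_ineq {f : ℝ → ℝ} (hf : ConvexOn ℝ Set.univ f) {c : ℝ} (hc : 1 ≤ c) :
    ∫ x in (-1:ℝ)..1, f x ≤ c⁻¹ * ∫ x in (-c)..c, f x := by
  have hcont : Continuous f := continuousOn_univ.mp (hf.continuousOn isOpen_univ)
  have hc0 : (0:ℝ) < c := lt_of_lt_of_le one_pos hc
  have i1 : IntervalIntegrable (fun x => f x + f (-x)) volume (-1) 1 :=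
    ((hcont.add (hcont.comp continuous_neg)).intervalIntegrable _ _)
  have i2 : IntervalIntegrable (fun x => f (c * x) + f (-(c * x))) volume (-1) 1 := by
    apply Continuous.intervalIntegrable
    exact (hcont.comp (continuous_const.mul continuous_id)).add
      (hcont.comp ((continuous_const.mul continuous_id).neg))
  have key : ∫ x in (-1:ℝ)..1, (f x + f (-x)) ≤ ∫ x in (-1:ℝ)..1, (f (c * x) + f (-(c * x))) :=
    intervalIntegral.integral_mono_on (by norm_num) i1 i2
      (fun x _ => convex_pair hf hc x)
  have A : ∫ x in (-1:ℝ)..1, f (-x) = ∫ x in (-1:ℝ)..1, f x := by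
    rw [intervalIntegral.integral_comp_neg]; norm_num
  have B : ∫ x in (-1:ℝ)..1, f (c * x) = c⁻¹ * ∫ x in (-c)..c, f x := by
    rw [intervalIntegral.integral_comp_mul_left f hc0.ne']
    norm_num [smul_eq_mul]
  have C : ∫ x in (-1:ℝ)..1, f (-(c * x)) = ∫ x in (-1:ℝ)..1, f (c * x) := by
    have h := intervalIntegral.integral_comp_neg (a := (-1:ℝ)) (b := 1) (fun x => f (c * x))
    simp only [mul_neg] at h
    rw [h]; norm_num
  have s1 : ∫ x in (-1:ℝ)..1, (f x + f (-x)) =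
      (∫ x in (-1:ℝ)..1, f x) + ∫ x in (-1:ℝ)..1, f (-x) :=
    intervalIntegral.integral_add (hcont.intervalIntegrable _ _)
      ((hcont.comp continuous_neg).intervalIntegrable _ _)
  have s2 : ∫ x in (-1:ℝ)..1, (f (c * x) + f (-(c * x))) =
      (∫ x in (-1:ℝ)..1, f (c * x)) + ∫ x in (-1:ℝ)..1, f (-(c * x)) :=
    intervalIntegral.integral_add
      ((hcont.comp (continuous_const.mul continuous_id)).intervalIntegrable _ _)
      ((hcont.comp ((continuous_const.mul continuous_id).neg)).intervalIntegrable _ _)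
  rw [s1, s2, A, C, B] at key
  linarith

lemma integral_unifIcc {a b : ℝ} (hab : a < b) (f : ℝ → ℝ) :
    ∫ x, f x ∂(unifIcc a b) = (b - a)⁻¹ * ∫ x in a..b, f x := by
  rw [unifIcc, integral_smul_measure, Real.volume_Icc, ENNReal.toReal_inv,
    ENNReal.toReal_ofReal (by linarith), smul_eq_mul]
  congr 1
  rw [intervalIntegral.integral_of_le hab.le, ← integral_Icc_eq_integral_Ioc]

lemma convexOrder_unif {c : ℝ} (hc : 1 ≤ c) :
    ConvexOrder1 (unifIcc (-1) 1) (unifIcc (-c) c) := by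
  intro f hf
  have hc0 : (0:ℝ) < c := lt_of_lt_of_le one_pos hc
  rw [integral_unifIcc (by linarith) f, integral_unifIcc (by linarith) f]
  have key := interval_ineq hf hc
  have e1 : (1 - (-1) : ℝ)⁻¹ = 2⁻¹ := by norm_num
  have e2 : (c - -c : ℝ)⁻¹ = 2⁻¹ * c⁻¹ := by
    rw [show (c - -c : ℝ) = 2 * c by ring, mul_inv]
  rw [e1, e2, mul_assoc]
  have h2 : (0:ℝ) ≤ 2⁻¹ := by norm_num
  exact mul_le_mul_of_nonneg_left key h2

lemma abs_integral : ∫ x in (-1:ℝ)..1, |x| = 1 := by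
  have h1 : ∫ x in (0:ℝ)..1, |x| = 1/2 := by
    have hcg : ∀ x ∈ Set.uIcc (0:ℝ) 1, |x| = x := by
      intro x hx
      rw [Set.uIcc_of_le (by norm_num)] at hx
      exact abs_of_nonneg hx.1
    rw [intervalIntegral.integral_congr hcg]
    simp
  have h2 : ∫ x in (-1:ℝ)..0, |x| = 1/2 := by
    have h := intervalIntegral.integral_comp_neg (a := (0:ℝ)) (b := 1) (fun x => |x|)
    simp only [abs_neg, neg_zero] at h
    rw [← h, h1]
  have := intervalIntegral.integral_add_adjacent_intervals
    (a := (-1:ℝ)) (b := 0) (c := 1) (f := fun x => |x|) (μ := volume)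
    ((continuous_abs).intervalIntegrable _ _) ((continuous_abs).intervalIntegrable _ _)
  rw [← this]; rw [h1, h2]; norm_num

lemma f_convex : ConvexOn ℝ Set.univ (fun p : ℝ × ℝ => |3 * p.2 - 2 * p.1|) := by
  refine ⟨convex_univ, fun x _ y _ a b ha hb hab => ?_⟩
  have : 3 * (a • x + b • y).2 - 2 * (a • x + b • y).1
      = a * (3 * x.2 - 2 * x.1) + b * (3 * y.2 - 2 * y.1) := by
    simp [Prod.smul_fst, Prod.smul_snd, smul_eq_mul]; ring
  simp only [smul_eq_mul, this]
  calc |a * (3 * x.2 - 2 * x.1) + b * (3 * y.2 - 2 * y.1)|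
      ≤ |a * (3 * x.2 - 2 * x.1)| + |b * (3 * y.2 - 2 * y.1)| := abs_add_le _ _
    _ = a * |3 * x.2 - 2 * x.1| + b * |3 * y.2 - 2 * y.1| := by
        rw [abs_mul, abs_mul, abs_of_nonneg ha, abs_of_nonneg hb]

theorem monotone_couplings_not_in_convex_order :
    let μ₁ := unifIcc (-1) 1
    let μ₂ := unifIcc (-1) 1
    let ν₁ := unifIcc (-3) 3
    let ν₂ := unifIcc (-2) 2
    -- the monotone coupling of (μ₁, μ₂): uniform on the diagonal segment
    let χμ : Measure (ℝ × ℝ) := Measure.map (fun t => (t, t)) μ₁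
    -- the monotone coupling of (ν₁, ν₂): uniform on the segment y₂ = (2/3) y₁
    let χν : Measure (ℝ × ℝ) := Measure.map (fun t => (t, (2 / 3) * t)) ν₁
    ConvexOrder1 μ₁ ν₁ ∧ ConvexOrder1 μ₂ ν₂ ∧
      ∃ f : ℝ × ℝ → ℝ, ConvexOn ℝ Set.univ f ∧
        ∫ p, f p ∂χν < ∫ p, f p ∂χμ := by
  intro μ₁ μ₂ ν₁ ν₂ χμ χν
  refine ⟨convexOrder_unif (by norm_num), convexOrder_unif (by norm_num), ?_⟩
  refine ⟨fun p : ℝ × ℝ => |3 * p.2 - 2 * p.1|, f_convex, ?_⟩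
  have hfc : Continuous (fun p : ℝ × ℝ => |3 * p.2 - 2 * p.1|) := by
    apply continuous_abs.comp
    exact (continuous_const.mul continuous_snd).sub (continuous_const.mul continuous_fst)
  have hν : ∫ p, |3 * p.2 - 2 * p.1| ∂χν = 0 := by
    rw [show χν = Measure.map (fun t : ℝ => (t, (2 / 3) * t)) ν₁ from rfl,
      integral_map (f := fun p : ℝ × ℝ => |3 * p.2 - 2 * p.1|)
        ((by fun_prop : Measurable (fun t : ℝ => (t, (2/3:ℝ) * t)))).aemeasurable
        hfc.aestronglyMeasurable]
    have : ∀ t : ℝ, |3 * ((2:ℝ)/3 * t) - 2 * t| = 0 := by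
      intro t; rw [abs_eq_zero]; ring
    simp only [this, integral_zero]
  have hμ : ∫ p, |3 * p.2 - 2 * p.1| ∂χμ = 1/2 := by
    rw [show χμ = Measure.map (fun t : ℝ => (t, t)) μ₁ from rfl,
      integral_map (f := fun p : ℝ × ℝ => |3 * p.2 - 2 * p.1|)
        ((by fun_prop : Measurable (fun t : ℝ => (t, t)))).aemeasurable
        hfc.aestronglyMeasurable]
    have : ∀ t : ℝ, |3 * t - 2 * t| = |t| := by intro t; congr 1; ring
    simp only [this]
    rw [show μ₁ = unifIcc (-1) 1 from rfl, integral_unifIcc (by norm_num) _, abs_integral]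
    norm_num
  rw [hν, hμ]
  norm_num
end

section
/- Let μ_i ~ N(0, σ_i²) and ν_i ~ N(0, ρ_i²) with 0 < σ_i < ρ_i for i = 1, …, d, let λ_i = √(ρ_i² − σ_i²), and let c(x, y) = Σ_{i<j} (a_{ij} x_i x_j + b_{ij} y_i y_j) with a_{ij}, b_{ij} ≥ 0. Then for every martingale coupling π with these marginals (E_π[Y|X] = X, X_i ~ μ_i, Y_i ~ ν_i), E_π[c(X, Y)] ≤ Σ_{i<j} ((a_{ij} + b_{ij}) σ_i σ_j + b_{ij} λ_i λ_j), and this bound is attained by the coupling X_i = σ_i U, Y_i = X_i + λ_i Z with U, Z independent standard normals. -/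
open MeasureTheory ProbabilityTheory Real
open scoped NNReal ENNReal

lemma sq_mul_exp_integrable {b : ℝ} (hb : 0 < b) :
    Integrable (fun x : ℝ => x ^ 2 * Real.exp (-b * x ^ 2)) := by
  have := integrable_rpow_mul_exp_neg_mul_sq hb (s := 2) (by norm_num)
  simpa [Real.rpow_natCast] using this

lemma integral_sq_mul_exp {b : ℝ} (hb : 0 < b) :
    ∫ x : ℝ, x ^ 2 * Real.exp (-b * x ^ 2) = (2 * b)⁻¹ * Real.sqrt (π / b) := by
  have hder : ∀ x : ℝ, HasDerivAt (fun x : ℝ => x * Real.exp (-b * x ^ 2))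
      (Real.exp (-b * x ^ 2) - 2 * b * (x ^ 2 * Real.exp (-b * x ^ 2))) x := by
    intro x
    have h1 : HasDerivAt (fun x : ℝ => -b * x ^ 2) (-b * (2 * x)) x := by
      simpa using ((hasDerivAt_pow 2 x).const_mul (-b))
    have h2 := h1.exp
    have h3 := (hasDerivAt_id x).mul h2
    simp only [id] at h3
    exact h3.congr_deriv (by ring)
  have hi2 := sq_mul_exp_integrable hb
  have hie := integrable_exp_neg_mul_sq hb
  have hiF : Integrable (fun x : ℝ => x * Real.exp (-b * x ^ 2)) :=
    integrable_mul_exp_neg_mul_sq hb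
  have hiF' : Integrable
      (fun x : ℝ => Real.exp (-b * x ^ 2) - 2 * b * (x ^ 2 * Real.exp (-b * x ^ 2))) :=
    hie.sub (hi2.const_mul _)
  have h0 := integral_eq_zero_of_hasDerivAt_of_integrable hder hiF' hiF
  rw [integral_sub hie (hi2.const_mul _), integral_const_mul, integral_gaussian,
    sub_eq_zero] at h0
  have hb' : (2 * b) ≠ 0 := by positivity
  rw [h0, inv_mul_cancel_left₀ hb']

lemma integral_mul_exp_zero {b : ℝ} (hb : 0 < b) :
    ∫ x : ℝ, x * Real.exp (-b * x ^ 2) = 0 := by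
  have hder : ∀ x : ℝ, HasDerivAt (fun x : ℝ => -(2 * b)⁻¹ * Real.exp (-b * x ^ 2))
      (x * Real.exp (-b * x ^ 2)) x := by
    intro x
    have h1 : HasDerivAt (fun x : ℝ => -b * x ^ 2) (-b * (2 * x)) x := by
      simpa using ((hasDerivAt_pow 2 x).const_mul (-b))
    have h2 := (h1.exp).const_mul (-(2 * b)⁻¹)
    exact h2.congr_deriv (by field_simp)
  exact integral_eq_zero_of_hasDerivAt_of_integrable hder
    (integrable_mul_exp_neg_mul_sq hb) ((integrable_exp_neg_mul_sq hb).const_mul _)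

lemma integral_fun_gaussianReal {v : ℝ≥0} (hv : v ≠ 0) (g : ℝ → ℝ) :
    ∫ x, g x ∂(gaussianReal 0 v) = ∫ x, gaussianPDFReal 0 v x * g x := by
  rw [gaussianReal_of_var_ne_zero 0 hv]
  have h1 : gaussianPDF 0 v = fun x => ((gaussianPDFReal 0 v x).toNNReal : ℝ≥0∞) := rfl
  rw [h1, integral_withDensity_eq_integral_smul
    ((measurable_gaussianPDFReal 0 v).real_toNNReal) g]
  congr 1
  ext x
  simp [NNReal.smul_def, Real.coe_toNNReal _ (gaussianPDFReal_nonneg 0 v x)]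

lemma my_integral_sq_gaussianReal (v : ℝ≥0) : ∫ x, x ^ 2 ∂(gaussianReal 0 v) = v := by
  rcases eq_or_ne v 0 with rfl | hv
  · simp [gaussianReal_zero_var]
  · have hv' : 0 < (v : ℝ) := by positivity
    have hb : 0 < (2 * (v : ℝ))⁻¹ := by positivity
    rw [integral_fun_gaussianReal hv (fun x => x ^ 2)]
    have h2 : ∀ x : ℝ, gaussianPDFReal 0 v x * x ^ 2 =
        (√(2 * π * v))⁻¹ * (x ^ 2 * rexp (-(2 * (v:ℝ))⁻¹ * x ^ 2)) := by
      intro x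
      have he : -(x - 0) ^ 2 / (2 * (v:ℝ)) = -(2 * (v:ℝ))⁻¹ * x ^ 2 := by
        field_simp
        ring
      unfold gaussianPDFReal
      rw [he]
      ring
    simp_rw [h2]
    rw [integral_const_mul, integral_sq_mul_exp hb]
    have e1 : (2 * (2 * (v:ℝ))⁻¹)⁻¹ = (v : ℝ) := by field_simp
    have e2 : π / (2 * (v:ℝ))⁻¹ = 2 * π * v := by
      field_simp
    rw [e1, e2]
    have h3 : √(2 * π * v) ≠ 0 := by
      positivity
    field_simp

lemma my_integral_id_gaussianReal (v : ℝ≥0) : ∫ x, x ∂(gaussianReal 0 v) = 0 := by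
  rcases eq_or_ne v 0 with rfl | hv
  · simp [gaussianReal_zero_var]
  · have hb : 0 < (2 * (v : ℝ))⁻¹ := by positivity
    rw [integral_fun_gaussianReal hv (fun x => x)]
    have h2 : ∀ x : ℝ, gaussianPDFReal 0 v x * x =
        (√(2 * π * v))⁻¹ * (x * rexp (-(2 * (v:ℝ))⁻¹ * x ^ 2)) := by
      intro x
      have he : -(x - 0) ^ 2 / (2 * (v:ℝ)) = -(2 * (v:ℝ))⁻¹ * x ^ 2 := by
        field_simp
        ring
      unfold gaussianPDFReal
      rw [he]
      ring
    simp_rw [h2]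
    rw [integral_const_mul, integral_mul_exp_zero hb, mul_zero]

lemma my_integrable_sq_gaussianReal (v : ℝ≥0) :
    Integrable (fun x => x ^ 2) (gaussianReal 0 v) := by
  rcases eq_or_ne v 0 with rfl | hv
  · rw [gaussianReal_zero_var]
    constructor
    · exact (measurable_id.pow_const 2).aestronglyMeasurable
    · simp [HasFiniteIntegral, lintegral_dirac]
  · have hb : 0 < (2 * (v : ℝ))⁻¹ := by positivity
    rw [gaussianReal_of_var_ne_zero 0 hv]
    have h1 : gaussianPDF 0 v = fun x => ((gaussianPDFReal 0 v x).toNNReal : ℝ≥0∞) := rfl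
    rw [h1, integrable_withDensity_iff_integrable_smul
      ((measurable_gaussianPDFReal 0 v).real_toNNReal)]
    have : (fun x : ℝ => (gaussianPDFReal 0 v x).toNNReal • (x ^ 2)) =
        fun x : ℝ => (√(2 * π * v))⁻¹ * (x ^ 2 * rexp (-(2 * (v:ℝ))⁻¹ * x ^ 2)) := by
      ext x
      rw [NNReal.smul_def, Real.coe_toNNReal _ (gaussianPDFReal_nonneg 0 v x)]
      have he : -(x - 0) ^ 2 / (2 * (v:ℝ)) = -(2 * (v:ℝ))⁻¹ * x ^ 2 := by
        field_simp
        ring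
      unfold gaussianPDFReal
      rw [he, smul_eq_mul]
      ring
    rw [this]
    exact (sq_mul_exp_integrable hb).const_mul _

section Abstract
variable {Ω : Type} [MeasurableSpace Ω]

lemma integrable_mul_of_memℒp_two {μ : Measure Ω} {f g : Ω → ℝ}
    (hf : MemLp f 2 μ) (hg : MemLp g 2 μ) :
    Integrable (fun ω => f ω * g ω) μ := by
  have hf2i : Integrable (fun ω => f ω ^ 2) μ := (memLp_two_iff_integrable_sq hf.1).mp hf
  have hg2i : Integrable (fun ω => g ω ^ 2) μ := (memLp_two_iff_integrable_sq hg.1).mp hg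
  refine Integrable.mono' (g := fun ω => (f ω ^ 2 + g ω ^ 2) / 2)
    ((hf2i.add hg2i).div_const 2) (hf.1.mul hg.1) (ae_of_all _ fun ω => ?_)
  rw [Real.norm_eq_abs, abs_mul]
  nlinarith [sq_nonneg (|f ω| - |g ω|), sq_abs (f ω), sq_abs (g ω)]

lemma moment_of_map_gaussian {μ : Measure Ω} {f : Ω → ℝ} (hf : Measurable f)
    {v : ℝ≥0} (h : Measure.map f μ = gaussianReal 0 v) :
    MemLp f 2 μ ∧ ∫ ω, f ω ^ 2 ∂μ = v := by
  have hsq : Integrable (fun ω => f ω ^ 2) μ := by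
    have h1 := my_integrable_sq_gaussianReal v
    rw [← h] at h1
    have h2 := (integrable_map_measure (by fun_prop) hf.aemeasurable).mp h1
    exact h2
  refine ⟨(memLp_two_iff_integrable_sq hf.aestronglyMeasurable).mpr hsq, ?_⟩
  rw [← my_integral_sq_gaussianReal v, ← h,
    integral_map hf.aemeasurable (by fun_prop)]

lemma mean_of_map_gaussian {μ : Measure Ω} {f : Ω → ℝ} (hf : Measurable f)
    {v : ℝ≥0} (h : Measure.map f μ = gaussianReal 0 v) :
    ∫ ω, f ω ∂μ = 0 := by
  rw [← my_integral_id_gaussianReal v, ← h]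
  exact (integral_map hf.aemeasurable measurable_id.aestronglyMeasurable).symm

lemma integral_mul_le_of_sq {μ : Measure Ω} {f g : Ω → ℝ} {A B : ℝ}
    (hA : 0 < A) (hB : 0 < B) (hf : MemLp f 2 μ) (hg : MemLp g 2 μ)
    (hf2 : ∫ ω, f ω ^ 2 ∂μ ≤ A ^ 2) (hg2 : ∫ ω, g ω ^ 2 ∂μ ≤ B ^ 2) :
    ∫ ω, f ω * g ω ∂μ ≤ A * B := by
  have hf2i : Integrable (fun ω => f ω ^ 2) μ := (memLp_two_iff_integrable_sq hf.1).mp hf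
  have hg2i : Integrable (fun ω => g ω ^ 2) μ := (memLp_two_iff_integrable_sq hg.1).mp hg
  have hfg : Integrable (fun ω => f ω * g ω) μ := integrable_mul_of_memℒp_two hf hg
  have key : ∫ ω, f ω * g ω ∂μ ≤
      ∫ ω, (B ^ 2 * f ω ^ 2 + A ^ 2 * g ω ^ 2) / (2 * A * B) ∂μ := by
    refine integral_mono hfg (((hf2i.const_mul _).add (hg2i.const_mul _)).div_const _)
      fun ω => ?_
    rw [le_div_iff₀ (by positivity)]
    nlinarith [sq_nonneg (B * f ω - A * g ω)]
  rw [integral_div, integral_add (hf2i.const_mul _) (hg2i.const_mul _),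
    integral_const_mul, integral_const_mul] at key
  have h2 : (B ^ 2 * ∫ ω, f ω ^ 2 ∂μ + A ^ 2 * ∫ ω, g ω ^ 2 ∂μ) / (2 * A * B) ≤ A * B := by
    rw [div_le_iff₀ (by positivity)]
    nlinarith [mul_le_mul_of_nonneg_left hf2 (by positivity : (0:ℝ) ≤ B ^ 2),
      mul_le_mul_of_nonneg_left hg2 (by positivity : (0:ℝ) ≤ A ^ 2)]
  linarith

lemma integral_mul_eq_of_condexp {m m0 : MeasurableSpace Ω} (hm : m ≤ m0) {μ : Measure Ω}
    [IsProbabilityMeasure μ] {f g h : Ω → ℝ}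
    (hfm : StronglyMeasurable[m] f)
    (hfg : Integrable (fun ω => f ω * g ω) μ) (hg : Integrable g μ)
    (hch : μ[g|m] =ᵐ[μ] h) :
    ∫ ω, f ω * g ω ∂μ = ∫ ω, f ω * h ω ∂μ := by
  have h1 : ∫ ω, (μ[fun ω => f ω * g ω|m]) ω ∂μ = ∫ ω, f ω * g ω ∂μ :=
    integral_condExp hm
  have h2 : μ[fun ω => f ω * g ω|m] =ᵐ[μ] fun ω => f ω * (μ[g|m]) ω := by
    have := condExp_mul_of_stronglyMeasurable_left hfm (mΩ := m0) (μ := μ) (g := g) ?_ hg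
    · exact this
    · exact hfg
  have h3 : (fun ω => f ω * (μ[g|m]) ω) =ᵐ[μ] fun ω => f ω * h ω := by
    filter_upwards [hch] with ω hω
    rw [hω]
  rw [← h1, integral_congr_ae (h2.trans h3)]

end Abstract



open MeasureTheory ProbabilityTheory
open scoped BigOperators

theorem vmot_gaussian_value {d : ℕ}
    (σ ρ lam : Fin d → ℝ) (hσ : ∀ i, 0 < σ i) (hσρ : ∀ i, σ i < ρ i)
    (hlam : ∀ i, lam i = Real.sqrt (ρ i ^ 2 - σ i ^ 2))
    (a b : Fin d → Fin d → ℝ) (ha : ∀ i j, 0 ≤ a i j) (hb : ∀ i j, 0 ≤ b i j) :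
    -- the upper bound holds for every martingale coupling with these marginals
    (∀ (Ω : Type) (_ : MeasurableSpace Ω) (μ : Measure Ω), IsProbabilityMeasure μ →
      ∀ X Y : Ω → Fin d → ℝ, Measurable X → Measurable Y →
      (∀ i, Integrable (fun ω => X ω i) μ) → (∀ i, Integrable (fun ω => Y ω i) μ) →
      (∀ i, Measure.map (fun ω => X ω i) μ = gaussianReal 0 ((σ i ^ 2).toNNReal)) →
      (∀ i, Measure.map (fun ω => Y ω i) μ = gaussianReal 0 ((ρ i ^ 2).toNNReal)) →
      (∀ i, μ[(fun ω => Y ω i) | MeasurableSpace.comap X inferInstance]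
        =ᵐ[μ] fun ω => X ω i) →
      ∫ ω, (∑ i : Fin d, ∑ j ∈ Finset.univ.filter (fun j => i < j),
          (a i j * X ω i * X ω j + b i j * Y ω i * Y ω j)) ∂μ ≤
        ∑ i : Fin d, ∑ j ∈ Finset.univ.filter (fun j => i < j),
          ((a i j + b i j) * σ i * σ j + b i j * lam i * lam j)) ∧
    -- and the bound is attained by the single-factor coupling
    (∀ (Ω : Type) (_ : MeasurableSpace Ω) (μ : Measure Ω), IsProbabilityMeasure μ →
      ∀ U Z : Ω → ℝ, Measurable U → Measurable Z →
      Measure.map U μ = gaussianReal 0 1 → Measure.map Z μ = gaussianReal 0 1 →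
      IndepFun U Z μ →
      ∫ ω, (∑ i : Fin d, ∑ j ∈ Finset.univ.filter (fun j => i < j),
          (a i j * (σ i * U ω) * (σ j * U ω) +
            b i j * (σ i * U ω + lam i * Z ω) * (σ j * U ω + lam j * Z ω))) ∂μ =
        ∑ i : Fin d, ∑ j ∈ Finset.univ.filter (fun j => i < j),
          ((a i j + b i j) * σ i * σ j + b i j * lam i * lam j)) := by
  have hρσ2 : ∀ i, 0 < ρ i ^ 2 - σ i ^ 2 := by
    intro i
    have := hσ i; have := hσρ i
    nlinarith
  have hlampos : ∀ i, 0 < lam i := fun i => by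
    rw [hlam i]; exact Real.sqrt_pos.mpr (hρσ2 i)
  have hlamsq : ∀ i, lam i ^ 2 = ρ i ^ 2 - σ i ^ 2 := fun i => by
    rw [hlam i, Real.sq_sqrt (hρσ2 i).le]
  constructor
  · -- upper bound
    intro Ω mΩ μ hμ X Y hX hY hXint hYint hXlaw hYlaw hmart
    have hXm : ∀ i, MemLp (fun ω => X ω i) 2 μ :=
      fun i => (moment_of_map_gaussian (by fun_prop) (hXlaw i)).1
    have hYm : ∀ i, MemLp (fun ω => Y ω i) 2 μ :=
      fun i => (moment_of_map_gaussian (by fun_prop) (hYlaw i)).1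
    have hX2 : ∀ i, ∫ ω, X ω i ^ 2 ∂μ = σ i ^ 2 := fun i => by
      rw [(moment_of_map_gaussian (by fun_prop) (hXlaw i)).2,
        Real.coe_toNNReal _ (sq_nonneg _)]
    have hY2 : ∀ i, ∫ ω, Y ω i ^ 2 ∂μ = ρ i ^ 2 := fun i => by
      rw [(moment_of_map_gaussian (by fun_prop) (hYlaw i)).2,
        Real.coe_toNNReal _ (sq_nonneg _)]
    -- martingale consequence : E[X_i Y_j] = E[X_i X_j]
    have hXmeas : Measurable[MeasurableSpace.comap X inferInstance] X :=
      measurable_iff_comap_le.mpr le_rfl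
    have hXY : ∀ i j, ∫ ω, X ω i * Y ω j ∂μ = ∫ ω, X ω i * X ω j ∂μ := by
      intro i j
      exact integral_mul_eq_of_condexp (measurable_iff_comap_le.mp hX)
        ((measurable_pi_apply i).comp hXmeas).stronglyMeasurable
        (integrable_mul_of_memℒp_two (hXm i) (hYm j))
        ((hYm j).integrable one_le_two) (hmart j)
    -- second moment of the increments
    have hDm : ∀ i, MemLp (fun ω => Y ω i - X ω i) 2 μ := fun i => (hYm i).sub (hXm i)
    have hX2i : ∀ i, Integrable (fun ω => X ω i ^ 2) μ :=
      fun i => (memLp_two_iff_integrable_sq (hXm i).1).mp (hXm i)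
    have hY2i : ∀ i, Integrable (fun ω => Y ω i ^ 2) μ :=
      fun i => (memLp_two_iff_integrable_sq (hYm i).1).mp (hYm i)
    have hXiYj : ∀ i j, Integrable (fun ω => X ω i * Y ω j) μ :=
      fun i j => integrable_mul_of_memℒp_two (hXm i) (hYm j)
    have hXiXj : ∀ i j, Integrable (fun ω => X ω i * X ω j) μ :=
      fun i j => integrable_mul_of_memℒp_two (hXm i) (hXm j)
    have hYiYj : ∀ i j, Integrable (fun ω => Y ω i * Y ω j) μ :=
      fun i j => integrable_mul_of_memℒp_two (hYm i) (hYm j)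
    have hDiDj : ∀ i j, Integrable (fun ω => (Y ω i - X ω i) * (Y ω j - X ω j)) μ :=
      fun i j => integrable_mul_of_memℒp_two (hDm i) (hDm j)
    have hD2 : ∀ i, ∫ ω, (Y ω i - X ω i) ^ 2 ∂μ = lam i ^ 2 := by
      intro i
      have hexp : (fun ω => (Y ω i - X ω i) ^ 2) =
          fun ω => Y ω i ^ 2 - 2 * (X ω i * Y ω i) + X ω i ^ 2 := by
        funext ω; ring
      have hA : Integrable (fun ω => Y ω i ^ 2 - 2 * (X ω i * Y ω i)) μ := by
        exact (hY2i i).sub ((hXiYj i i).const_mul 2)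
      have hB : Integrable (fun ω => 2 * (X ω i * Y ω i)) μ := by
        exact (hXiYj i i).const_mul 2
      rw [hexp, integral_add hA (hX2i i),
        integral_sub (hY2i i) hB, integral_const_mul,
        hXY i i, hY2 i, hX2 i, hlamsq i]
      have : ∫ ω, X ω i * X ω i ∂μ = σ i ^ 2 := by
        rw [← hX2 i]; congr 1; funext ω; ring
      rw [this]; ring
    -- Cauchy-Schwarz bounds
    have hXXle : ∀ i j, ∫ ω, X ω i * X ω j ∂μ ≤ σ i * σ j := fun i j =>
      integral_mul_le_of_sq (hσ i) (hσ j) (hXm i) (hXm j) (hX2 i).le (hX2 j).le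
    have hDDle : ∀ i j, ∫ ω, (Y ω i - X ω i) * (Y ω j - X ω j) ∂μ ≤ lam i * lam j :=
      fun i j => integral_mul_le_of_sq (hlampos i) (hlampos j) (hDm i) (hDm j)
        (hD2 i).le (hD2 j).le
    -- Y_i Y_j bound
    have hYYle : ∀ i j, ∫ ω, Y ω i * Y ω j ∂μ ≤ σ i * σ j + lam i * lam j := by
      intro i j
      have hexp : (fun ω => Y ω i * Y ω j) =
          fun ω => (X ω i * X ω j + (X ω i * Y ω j - X ω i * X ω j))
            + ((X ω j * Y ω i - X ω j * X ω i)
              + (Y ω i - X ω i) * (Y ω j - X ω j)) := by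
        funext ω; ring
      have hYiXj : Integrable (fun ω => X ω j * Y ω i) μ :=
        integrable_mul_of_memℒp_two (hXm j) (hYm i)
      have hS1 : Integrable (fun ω => X ω i * Y ω j - X ω i * X ω j) μ := by
        exact (hXiYj i j).sub (hXiXj i j)
      have hS2 : Integrable (fun ω => X ω j * Y ω i - X ω j * X ω i) μ := by
        exact hYiXj.sub (hXiXj j i)
      have hA : Integrable (fun ω => X ω i * X ω j
          + (X ω i * Y ω j - X ω i * X ω j)) μ := by
        exact (hXiXj i j).add hS1
      have hB : Integrable (fun ω => X ω j * Y ω i - X ω j * X ω i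
          + (Y ω i - X ω i) * (Y ω j - X ω j)) μ := by
        exact hS2.add (hDiDj i j)
      rw [hexp, integral_add hA hB,
        integral_add (hXiXj i j) hS1,
        integral_add hS2 (hDiDj i j),
        integral_sub (hXiYj i j) (hXiXj i j),
        integral_sub hYiXj (hXiXj j i), hXY i j, hXY j i]
      have := hXXle i j
      have := hDDle i j
      linarith
    -- put it together
    have hterm : ∀ i j, Integrable
        (fun ω => a i j * X ω i * X ω j + b i j * Y ω i * Y ω j) μ := by
      intro i j
      have h1 := (hXiXj i j).const_mul (a i j)
      have h2 := (hYiYj i j).const_mul (b i j)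
      have := h1.add h2
      simpa [mul_assoc, Pi.add_def] using this
    have hinner : ∀ i : Fin d, Integrable
        (fun ω => ∑ j ∈ Finset.univ.filter (fun j => i < j),
          (a i j * X ω i * X ω j + b i j * Y ω i * Y ω j)) μ := by
      intro i
      exact integrable_finset_sum _ (fun j _ => hterm i j)
    rw [integral_finset_sum _ (fun i _ => hinner i)]
    refine Finset.sum_le_sum fun i _ => ?_
    rw [integral_finset_sum _ (fun j _ => hterm i j)]
    refine Finset.sum_le_sum fun j _ => ?_
    have e2 : ∫ ω, (a i j * X ω i * X ω j + b i j * Y ω i * Y ω j) ∂μ =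
        a i j * ∫ ω, X ω i * X ω j ∂μ + b i j * ∫ ω, Y ω i * Y ω j ∂μ := by
      have h1 := (hXiXj i j).const_mul (a i j)
      have h2 := (hYiYj i j).const_mul (b i j)
      rw [show (fun ω => a i j * X ω i * X ω j + b i j * Y ω i * Y ω j) =
        (fun ω => a i j * (X ω i * X ω j) + b i j * (Y ω i * Y ω j)) by
          funext ω; ring]
      rw [integral_add h1 h2, integral_const_mul, integral_const_mul]
    rw [e2]
    have h3 := hXXle i j
    have h4 := hYYle i j
    have h5 := ha i j
    have h6 := hb i j
    nlinarith [mul_le_mul_of_nonneg_left h3 h5, mul_le_mul_of_nonneg_left h4 h6]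
  · -- attainment
    intro Ω mΩ μ hμ U Z hU hZ hUlaw hZlaw hind
    have hUm : MemLp U 2 μ := (moment_of_map_gaussian hU hUlaw).1
    have hZm : MemLp Z 2 μ := (moment_of_map_gaussian hZ hZlaw).1
    have hU2 : ∫ ω, U ω ^ 2 ∂μ = 1 := by
      rw [(moment_of_map_gaussian hU hUlaw).2]; norm_num
    have hZ2 : ∫ ω, Z ω ^ 2 ∂μ = 1 := by
      rw [(moment_of_map_gaussian hZ hZlaw).2]; norm_num
    have hU2i : Integrable (fun ω => U ω ^ 2) μ := (memLp_two_iff_integrable_sq hUm.1).mp hUm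
    have hZ2i : Integrable (fun ω => Z ω ^ 2) μ := (memLp_two_iff_integrable_sq hZm.1).mp hZm
    have hUZi : Integrable (fun ω => U ω * Z ω) μ := integrable_mul_of_memℒp_two hUm hZm
    have hUZ : ∫ ω, U ω * Z ω ∂μ = 0 := by
      have := hind.integral_mul_eq_mul_integral hU.aestronglyMeasurable hZ.aestronglyMeasurable
      rw [show (fun ω => U ω * Z ω) = U * Z from rfl, this,
        mean_of_map_gaussian hU hUlaw, zero_mul]
    have hterm : ∀ i j : Fin d, Integrable (fun ω =>
        a i j * (σ i * U ω) * (σ j * U ω) +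
          b i j * (σ i * U ω + lam i * Z ω) * (σ j * U ω + lam j * Z ω)) μ := by
      intro i j
      have h1 : (fun ω =>
          a i j * (σ i * U ω) * (σ j * U ω) +
            b i j * (σ i * U ω + lam i * Z ω) * (σ j * U ω + lam j * Z ω)) =
          fun ω => (a i j * σ i * σ j + b i j * σ i * σ j) * U ω ^ 2
            + (b i j * (σ i * lam j + lam i * σ j)) * (U ω * Z ω)
            + (b i j * lam i * lam j) * Z ω ^ 2 := by
        funext ω; ring
      rw [h1]
      exact ((hU2i.const_mul _).add (hUZi.const_mul _)).add (hZ2i.const_mul _)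
    have hinner : ∀ i : Fin d, Integrable
        (fun ω => ∑ j ∈ Finset.univ.filter (fun j => i < j),
          (a i j * (σ i * U ω) * (σ j * U ω) +
            b i j * (σ i * U ω + lam i * Z ω) * (σ j * U ω + lam j * Z ω))) μ :=
      fun i => integrable_finset_sum _ (fun j _ => hterm i j)
    rw [integral_finset_sum _ (fun i _ => hinner i)]
    refine Finset.sum_congr rfl fun i _ => ?_
    rw [integral_finset_sum _ (fun j _ => hterm i j)]
    refine Finset.sum_congr rfl fun j _ => ?_
    have h1 : (fun ω =>
        a i j * (σ i * U ω) * (σ j * U ω) +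
          b i j * (σ i * U ω + lam i * Z ω) * (σ j * U ω + lam j * Z ω)) =
        fun ω => (a i j * σ i * σ j + b i j * σ i * σ j) * U ω ^ 2
          + (b i j * (σ i * lam j + lam i * σ j)) * (U ω * Z ω)
          + (b i j * lam i * lam j) * Z ω ^ 2 := by
      funext ω; ring
    have hA : Integrable (fun ω => (a i j * σ i * σ j + b i j * σ i * σ j) * U ω ^ 2
        + b i j * (σ i * lam j + lam i * σ j) * (U ω * Z ω)) μ := by
      exact (hU2i.const_mul _).add (hUZi.const_mul _)
    have hB : Integrable (fun ω => b i j * (σ i * lam j + lam i * σ j) * (U ω * Z ω)) μ := by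
      exact hUZi.const_mul _
    have hC : Integrable (fun ω => (a i j * σ i * σ j + b i j * σ i * σ j) * U ω ^ 2) μ := by
      exact hU2i.const_mul _
    rw [h1, integral_add hA (hZ2i.const_mul _),
      integral_add hC hB,
      integral_const_mul, integral_const_mul, integral_const_mul, hU2, hZ2, hUZ]
    ring
end

section
/- Let μ₁, μ₂ be probability measures on ℝ with finite second moments and quantile functions F₁⁻¹, F₂⁻¹. Among all couplings γ of (μ₁, μ₂), the integral ∫ x₁x₂ dγ is maximized by the monotone coupling χ = (F₁⁻¹, F₂⁻¹)_# Leb_{[0,1]}, i.e., for every γ with marginals μ₁, μ₂, ∫ x₁x₂ dγ ≤ ∫₀¹ F₁⁻¹(u) F₂⁻¹(u) du. -/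
open MeasureTheory

/-- The quantile function (generalized inverse CDF) of a measure on ℝ. -/
noncomputable def quantile (μ : Measure ℝ) (u : ℝ) : ℝ :=
  sInf {x : ℝ | u ≤ (μ (Set.Iic x)).toReal}

namespace MonoCoupling

open Set Filter Topology

noncomputable def F (μ : Measure ℝ) (x : ℝ) : ℝ := (μ (Set.Iic x)).toReal

lemma F_mono (μ : Measure ℝ) [IsProbabilityMeasure μ] : Monotone (F μ) := by
  intro a b hab
  exact ENNReal.toReal_mono (measure_ne_top μ _) (measure_mono (Iic_subset_Iic.2 hab))

lemma F_nonneg (μ : Measure ℝ) (x : ℝ) : 0 ≤ F μ x := ENNReal.toReal_nonneg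

lemma F_le_one (μ : Measure ℝ) [IsProbabilityMeasure μ] (x : ℝ) : F μ x ≤ 1 := by
  have := prob_le_one (μ := μ) (s := Iic x)
  simpa [F] using ENNReal.toReal_mono (by simp) this

lemma ofReal_F (μ : Measure ℝ) [IsProbabilityMeasure μ] (x : ℝ) :
    ENNReal.ofReal (F μ x) = μ (Iic x) := by
  rw [F, ENNReal.ofReal_toReal (measure_ne_top μ _)]

lemma le_F_iff (μ : Measure ℝ) [IsProbabilityMeasure μ] {u x : ℝ} :
    u ≤ F μ x ↔ ENNReal.ofReal u ≤ μ (Iic x) := by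
  exact (ENNReal.ofReal_le_iff_le_toReal (measure_ne_top μ _)).symm

lemma exists_F_ge (μ : Measure ℝ) [IsProbabilityMeasure μ] {u : ℝ} (hu : u < 1) :
    ∃ x, u ≤ F μ x := by
  have ht : Tendsto (fun x => μ (Iic x)) atTop (𝓝 (μ univ)) :=
    tendsto_measure_Iic_atTop μ
  have h1 : ENNReal.ofReal u < μ univ := by
    simp only [measure_univ]
    exact_mod_cast (by exact_mod_cast ENNReal.ofReal_lt_one.2 hu)
  have : ∀ᶠ x in atTop, ENNReal.ofReal u < μ (Iic x) :=
    ht.eventually (eventually_gt_nhds h1)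
  obtain ⟨x, hx⟩ := this.exists
  replace hx := hx.le
  exact ⟨x, (le_F_iff μ).2 hx⟩

lemma exists_F_lt (μ : Measure ℝ) [IsProbabilityMeasure μ] {u : ℝ} (hu : 0 < u) :
    ∃ x, F μ x < u := by
  have ht : Tendsto (μ ∘ fun n : ℕ => Iic (-(n : ℝ))) atTop (𝓝 (μ (⋂ n : ℕ, Iic (-(n : ℝ))))) := by
    refine tendsto_measure_iInter_atTop (fun n => measurableSet_Iic.nullMeasurableSet)
      (fun n m hnm => Iic_subset_Iic.2 (by
        have : (n : ℝ) ≤ m := Nat.cast_le.2 hnm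
        linarith)) ⟨0, measure_ne_top μ _⟩
  have hempty : (⋂ n : ℕ, Iic (-(n : ℝ))) = ∅ := by
    ext x
    simp only [mem_iInter, mem_Iic, mem_empty_iff_false, iff_false, not_forall, not_le]
    obtain ⟨n, hn⟩ := exists_nat_gt (-x)
    exact ⟨n, by linarith⟩
  rw [hempty, measure_empty] at ht
  have : ∀ᶠ n : ℕ in atTop, μ (Iic (-(n : ℝ))) < ENNReal.ofReal u := by
    refine ht.eventually (eventually_lt_nhds ?_)
    simpa using ENNReal.ofReal_pos.2 hu
  obtain ⟨n, hn⟩ := this.exists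
  refine ⟨-(n : ℝ), ?_⟩
  by_contra h
  exact absurd ((le_F_iff μ).1 (not_lt.1 h)) (not_le.2 hn)

lemma bddBelow_S (μ : Measure ℝ) [IsProbabilityMeasure μ] {u : ℝ} (hu : 0 < u) :
    BddBelow {x : ℝ | u ≤ F μ x} := by
  obtain ⟨x₀, hx₀⟩ := exists_F_lt μ hu
  exact ⟨x₀, fun y hy => by
    by_contra h
    exact absurd (le_trans hy (F_mono μ (le_of_not_ge h))) (not_le.2 hx₀)⟩

lemma quantile_mem (μ : Measure ℝ) [IsProbabilityMeasure μ] {u : ℝ} (hu0 : 0 < u)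
    (hu1 : u < 1) : u ≤ F μ (quantile μ u) := by
  set S := {x : ℝ | u ≤ F μ x} with hS
  have hne : S.Nonempty := exists_F_ge μ hu1
  have hbdd : BddBelow S := bddBelow_S μ hu0
  set a := quantile μ u with ha
  have haS : a = sInf S := rfl
  -- for every n, there is x ∈ S with x < a + 1/(n+1)
  have key : ∀ n : ℕ, ENNReal.ofReal u ≤ μ (Iic (a + 1 / (n + 1))) := by
    intro n
    have hlt : sInf S < a + 1 / (n + 1) := by
      rw [← haS]
      have : (0:ℝ) < 1 / ((n:ℝ) + 1) := by positivity
      linarith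
    obtain ⟨x, hxS, hx⟩ := (csInf_lt_iff hbdd hne).1 hlt
    exact le_trans ((le_F_iff μ).1 hxS) (measure_mono (Iic_subset_Iic.2 hx.le))
  have ht : Tendsto (μ ∘ fun n : ℕ => Iic (a + 1 / (n + 1))) atTop
      (𝓝 (μ (⋂ n : ℕ, Iic (a + 1 / ((n : ℝ) + 1))))) := by
    refine tendsto_measure_iInter_atTop (fun n => measurableSet_Iic.nullMeasurableSet)
      (fun n m hnm => Iic_subset_Iic.2 ?_) ⟨0, measure_ne_top μ _⟩
    have : (1 : ℝ) / (m + 1) ≤ 1 / (n + 1) := by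
      apply one_div_le_one_div_of_le (by positivity)
      have : (n : ℝ) ≤ m := Nat.cast_le.2 hnm
      linarith
    linarith
  have hinter : (⋂ n : ℕ, Iic (a + 1 / ((n : ℝ) + 1))) = Iic a := by
    ext x
    simp only [mem_iInter, mem_Iic]
    constructor
    · intro h
      by_contra hx
      push_neg at hx
      obtain ⟨n, hn⟩ := exists_nat_gt (1 / (x - a))
      have hxa : (0 : ℝ) < x - a := by linarith
      have hn0 : (0 : ℝ) < 1 / (x - a) := by positivity
      have : 1 / ((n : ℝ) + 1) < x - a := by
        rw [div_lt_iff₀ (by positivity)]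
        rw [div_lt_iff₀ (by linarith)] at hn
        nlinarith
      linarith [h n]
    · intro h n
      have : (0 : ℝ) < 1 / ((n : ℝ) + 1) := by positivity
      linarith
  rw [hinter] at ht
  refine (le_F_iff μ).2 (ge_of_tendsto ht ?_)
  exact Filter.Eventually.of_forall key

lemma quantile_le_iff (μ : Measure ℝ) [IsProbabilityMeasure μ] {u s : ℝ} (hu0 : 0 < u)
    (hu1 : u < 1) : quantile μ u ≤ s ↔ u ≤ F μ s := by
  constructor
  · intro h
    exact le_trans (quantile_mem μ hu0 hu1) (F_mono μ h)
  · intro h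
    exact csInf_le (bddBelow_S μ hu0) h

lemma quantile_monotoneOn (μ : Measure ℝ) [IsProbabilityMeasure μ] :
    MonotoneOn (quantile μ) (Ioo 0 1) := by
  intro u hu v hv huv
  exact csInf_le_csInf (bddBelow_S μ hu.1)
    ((exists_F_ge μ hv.2).imp fun x hx => hx)
    (fun x hx => le_trans huv hx)

noncomputable def nu : Measure ℝ := volume.restrict (Icc (0:ℝ) 1)

instance : IsProbabilityMeasure nu :=
  ⟨by simp [nu, Measure.restrict_apply_univ, Real.volume_Icc]⟩

lemma ae_Ioo : ∀ᵐ u ∂nu, u ∈ Ioo (0:ℝ) 1 := by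
  rw [nu, ae_restrict_iff' measurableSet_Icc]
  have h : volume ({u : ℝ | ¬ (u ∈ Icc (0:ℝ) 1 → u ∈ Ioo (0:ℝ) 1)}) = 0 := by
    have hsub : {u : ℝ | ¬ (u ∈ Icc (0:ℝ) 1 → u ∈ Ioo (0:ℝ) 1)} ⊆ {0, 1} := by
      intro u hu
      simp only [mem_setOf_eq, Classical.not_imp, mem_Icc, mem_Ioo, not_and_or, not_lt] at hu
      rcases hu.2 with h | h
      · exact Or.inl (le_antisymm h hu.1.1)
      · exact Or.inr (le_antisymm hu.1.2 h)
    refine measure_mono_null hsub ?_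
    have : ({0, 1} : Set ℝ).Countable := (Set.Finite.insert _ (Set.finite_singleton _)).countable
    exact this.measure_zero _
  exact ae_iff.2 h

lemma aemeasurable_quantile (μ : Measure ℝ) [IsProbabilityMeasure μ] :
    AEMeasurable (quantile μ) nu := by
  have h : nu = volume.restrict (Ioo (0:ℝ) 1) := by
    rw [nu, Measure.restrict_congr_set Ioo_ae_eq_Icc.symm]
  rw [h]
  exact aemeasurable_restrict_of_monotoneOn measurableSet_Ioo (quantile_monotoneOn μ)

lemma nu_quantile_le (μ : Measure ℝ) [IsProbabilityMeasure μ] (s : ℝ) :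
    nu {u : ℝ | quantile μ u ≤ s} = μ (Iic s) := by
  have hcong : {u : ℝ | quantile μ u ≤ s} =ᵐ[nu] Iic (F μ s) := by
    rw [Filter.eventuallyEq_set]
    filter_upwards [ae_Ioo] with u hu
    simp only [mem_setOf_eq, mem_Iic]
    exact quantile_le_iff μ hu.1 hu.2
  rw [measure_congr hcong, nu, Measure.restrict_apply' measurableSet_Icc]
  have : Iic (F μ s) ∩ Icc 0 1 = Icc 0 (F μ s) := by
    ext x
    simp only [mem_inter_iff, mem_Iic, mem_Icc]
    constructor
    · rintro ⟨h1, h2, h3⟩; exact ⟨h2, h1⟩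
    · rintro ⟨h1, h2⟩; exact ⟨h2, h1, le_trans h2 (F_le_one μ s)⟩
  rw [this, Real.volume_Icc, sub_zero, ofReal_F]

lemma map_quantile (μ : Measure ℝ) [IsProbabilityMeasure μ] :
    nu.map (quantile μ) = μ := by
  have : IsProbabilityMeasure (nu.map (quantile μ)) :=
    Measure.isProbabilityMeasure_map (aemeasurable_quantile μ)
  refine Measure.ext_of_Iic _ _ (fun s => ?_)
  rw [Measure.map_apply_of_aemeasurable (aemeasurable_quantile μ) measurableSet_Iic]
  exact nu_quantile_le μ s

lemma integrable_sq_quantile (μ : Measure ℝ) [IsProbabilityMeasure μ]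
    (h : Integrable (fun x => x ^ 2) μ) :
    Integrable (fun u => quantile μ u ^ 2) nu := by
  have := (integrable_map_measure
    (f := quantile μ) (g := fun x : ℝ => x ^ 2)
    (by rw [map_quantile]; exact h.1) (aemeasurable_quantile μ)).1
  rw [map_quantile] at this
  exact this h

/-! ### The kernel function `g` -/

noncomputable def g (x s : ℝ) : ℝ :=
  (Ico (0:ℝ) x).indicator 1 s - (Ico x (0:ℝ)).indicator 1 s

lemma measurable_g2 : Measurable (fun p : ℝ × ℝ => g p.1 p.2) := by
  have h1 : ∀ p : ℝ × ℝ, (Ico (0:ℝ) p.1).indicator (1 : ℝ → ℝ) p.2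
      = ({p : ℝ × ℝ | 0 ≤ p.2 ∧ p.2 < p.1}).indicator 1 p := by
    intro p
    by_cases h : 0 ≤ p.2 ∧ p.2 < p.1 <;> simp [Set.indicator, mem_Ico, h]
  have h2 : ∀ p : ℝ × ℝ, (Ico p.1 (0:ℝ)).indicator (1 : ℝ → ℝ) p.2
      = ({p : ℝ × ℝ | p.1 ≤ p.2 ∧ p.2 < 0}).indicator 1 p := by
    intro p
    by_cases h : p.1 ≤ p.2 ∧ p.2 < 0 <;> simp [Set.indicator, mem_Ico, h]
  have m1 : MeasurableSet {p : ℝ × ℝ | 0 ≤ p.2 ∧ p.2 < p.1} :=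
    (measurableSet_le measurable_const measurable_snd).inter
      (measurableSet_lt measurable_snd measurable_fst)
  have m2 : MeasurableSet {p : ℝ × ℝ | p.1 ≤ p.2 ∧ p.2 < 0} :=
    (measurableSet_le measurable_fst measurable_snd).inter
      (measurableSet_lt measurable_snd measurable_const)
  unfold g
  simp only [h1, h2]
  exact (measurable_const.indicator m1).sub (measurable_const.indicator m2)

lemma g_of_nonneg {s : ℝ} (hs : 0 ≤ s) (x : ℝ) : g x s = (Ioi s).indicator 1 x := by
  unfold g
  rw [Set.indicator_of_notMem (fun h : s ∈ Ico x 0 => absurd hs (not_le.2 h.2)), sub_zero]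
  by_cases h : s < x
  · rw [Set.indicator_of_mem (by exact ⟨hs, h⟩), Set.indicator_of_mem (by exact h)]; rfl
  · rw [Set.indicator_of_notMem (fun hm : s ∈ Ico 0 x => absurd hm.2 h),
      Set.indicator_of_notMem (by exact h)]

lemma g_of_neg {s : ℝ} (hs : s < 0) (x : ℝ) : g x s = -((Iic s).indicator 1 x) := by
  unfold g
  rw [Set.indicator_of_notMem (fun h : s ∈ Ico 0 x => absurd hs (not_lt.2 h.1)), zero_sub]
  by_cases h : x ≤ s
  · rw [Set.indicator_of_mem (by exact ⟨h, hs⟩), Set.indicator_of_mem (by exact h)]; rfl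
  · rw [Set.indicator_of_notMem (fun hm : s ∈ Ico x 0 => absurd hm.1 h),
      Set.indicator_of_notMem (by exact h)]

lemma g_nonneg_of_nonneg {x : ℝ} (hx : 0 ≤ x) (s : ℝ) : 0 ≤ g x s := by
  unfold g
  rw [Ico_eq_empty (not_lt.2 hx)]
  simpa using Set.indicator_nonneg (f := (1:ℝ→ℝ)) (s := Ico 0 x) (by intro _ _; norm_num) s

lemma g_nonpos_of_neg {x : ℝ} (hx : x < 0) (s : ℝ) : g x s ≤ 0 := by
  unfold g
  rw [Ico_eq_empty (not_lt.2 hx.le)]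
  simpa using Set.indicator_nonneg (f := (1:ℝ→ℝ)) (s := Ico x 0) (by intro _ _; norm_num) s

lemma integrable_indicator_Ico (a b : ℝ) :
    Integrable ((Ico a b).indicator (1 : ℝ → ℝ)) volume := by
  rw [integrable_indicator_iff measurableSet_Ico]
  exact integrableOn_const (by rw [Real.volume_Ico]; exact ENNReal.ofReal_ne_top)

lemma integrable_g (x : ℝ) : Integrable (g x) volume :=
  (integrable_indicator_Ico 0 x).sub (integrable_indicator_Ico x 0)

lemma integral_g (x : ℝ) : ∫ s, g x s = x := by
  unfold g
  rw [integral_sub (integrable_indicator_Ico 0 x) (integrable_indicator_Ico x 0),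
    integral_indicator_one measurableSet_Ico, integral_indicator_one measurableSet_Ico,
    measureReal_def, measureReal_def, Real.volume_Ico, Real.volume_Ico]
  rcases le_or_gt 0 x with h | h
  · rw [ENNReal.ofReal_of_nonpos (by linarith : (0:ℝ) - x ≤ 0),
      ENNReal.toReal_ofReal (by linarith : (0:ℝ) ≤ x - 0)]
    simp
  · rw [ENNReal.ofReal_of_nonpos (by linarith : x - 0 ≤ 0),
      ENNReal.toReal_ofReal (by linarith : (0:ℝ) ≤ 0 - x)]
    simp

lemma integral_abs_g (x : ℝ) : ∫ s, |g x s| = |x| := by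
  rcases le_or_gt 0 x with h | h
  · have : ∀ s, |g x s| = g x s := fun s => abs_of_nonneg (g_nonneg_of_nonneg h s)
    simp only [this, integral_g, abs_of_nonneg h]
  · have : ∀ s, |g x s| = -g x s := fun s => abs_of_nonpos (g_nonpos_of_neg h s)
    simp only [this, integral_neg, integral_g, abs_of_neg h]

/-! ### Quadrant comparisons -/

lemma integral_indicator_prod (γ : Measure (ℝ × ℝ)) [IsProbabilityMeasure γ]
    {A B : Set ℝ} (hA : MeasurableSet A) (hB : MeasurableSet B) :
    ∫ p : ℝ × ℝ, A.indicator 1 p.1 * B.indicator 1 p.2 ∂γ = (γ (A ×ˢ B)).toReal := by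
  have h : ∀ p : ℝ × ℝ, A.indicator (1 : ℝ → ℝ) p.1 * B.indicator (1 : ℝ → ℝ) p.2
      = (A ×ˢ B).indicator 1 p := by
    intro p
    by_cases h1 : p.1 ∈ A <;> by_cases h2 : p.2 ∈ B <;>
      simp [Set.indicator, h1, h2, Set.mem_prod]
  simp only [h]
  exact integral_indicator_one (hA.prod hB)

lemma split_snd_interval (γ : Measure (ℝ × ℝ)) [IsProbabilityMeasure γ]
    {A : Set ℝ} (hA : MeasurableSet A) (t : ℝ) :
    γ (A ×ˢ Iic t) + γ (A ×ˢ Ioi t) = (γ.map Prod.fst) A := by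
  have disj : Disjoint (A ×ˢ Iic t) (A ×ˢ Ioi t) :=
    Set.disjoint_left.mpr (fun p hp hq => absurd (mem_Iic.1 hp.2) (not_le.2 (mem_Ioi.1 hq.2)))
  rw [← measure_union disj (hA.prod measurableSet_Ioi), ← Set.prod_union, Iic_union_Ioi,
    Measure.map_apply measurable_fst hA]
  congr 1
  ext p
  simp

lemma split_fst_interval (γ : Measure (ℝ × ℝ)) [IsProbabilityMeasure γ]
    {B : Set ℝ} (hB : MeasurableSet B) (s : ℝ) :
    γ (Iic s ×ˢ B) + γ (Ioi s ×ˢ B) = (γ.map Prod.snd) B := by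
  have disj : Disjoint (Iic s ×ˢ B) (Ioi s ×ˢ B) :=
    Set.disjoint_left.mpr (fun p hp hq => absurd (mem_Iic.1 hp.1) (not_le.2 (mem_Ioi.1 hq.1)))
  rw [← measure_union disj (measurableSet_Ioi.prod hB), ← Set.union_prod, Iic_union_Ioi,
    Measure.map_apply measurable_snd hB]
  congr 1
  ext p
  simp

lemma quadrant_le (γ χ : Measure (ℝ × ℝ)) [IsProbabilityMeasure γ] [IsProbabilityMeasure χ]
    (hfst : γ.map Prod.fst = χ.map Prod.fst) (hsnd : γ.map Prod.snd = χ.map Prod.snd)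
    (hIic : ∀ s t : ℝ, γ (Iic s ×ˢ Iic t) ≤ χ (Iic s ×ˢ Iic t)) (z : ℝ × ℝ) :
    ∫ p : ℝ × ℝ, g p.1 z.1 * g p.2 z.2 ∂γ ≤ ∫ p : ℝ × ℝ, g p.1 z.1 * g p.2 z.2 ∂χ := by
  obtain ⟨s, t⟩ := z
  -- real-valued quadrant masses
  set aG := (γ (Iic s ×ˢ Iic t)).toReal with haG
  set bG := (γ (Ioi s ×ˢ Iic t)).toReal with hbG
  set cG := (γ (Iic s ×ˢ Ioi t)).toReal with hcG
  set dG := (γ (Ioi s ×ˢ Ioi t)).toReal with hdG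
  set aX := (χ (Iic s ×ˢ Iic t)).toReal with haX
  set bX := (χ (Ioi s ×ˢ Iic t)).toReal with hbX
  set cX := (χ (Iic s ×ˢ Ioi t)).toReal with hcX
  set dX := (χ (Ioi s ×ˢ Ioi t)).toReal with hdX
  have ha : aG ≤ aX := ENNReal.toReal_mono (measure_ne_top χ _) (hIic s t)
  have keyb : aG + bG = aX + bX := by
    rw [haG, hbG, haX, hbX, ← ENNReal.toReal_add (measure_ne_top _ _) (measure_ne_top _ _),
      ← ENNReal.toReal_add (measure_ne_top _ _) (measure_ne_top _ _),
      split_fst_interval γ measurableSet_Iic s, split_fst_interval χ measurableSet_Iic s, hsnd]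
  have keyc : aG + cG = aX + cX := by
    rw [haG, hcG, haX, hcX, ← ENNReal.toReal_add (measure_ne_top _ _) (measure_ne_top _ _),
      ← ENNReal.toReal_add (measure_ne_top _ _) (measure_ne_top _ _),
      split_snd_interval γ measurableSet_Iic t, split_snd_interval χ measurableSet_Iic t, hfst]
  have keyd : cG + dG = cX + dX := by
    rw [hcG, hdG, hcX, hdX, ← ENNReal.toReal_add (measure_ne_top _ _) (measure_ne_top _ _),
      ← ENNReal.toReal_add (measure_ne_top _ _) (measure_ne_top _ _),
      split_fst_interval γ measurableSet_Ioi s, split_fst_interval χ measurableSet_Ioi s, hsnd]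
  rcases le_or_gt 0 s with hs | hs <;> rcases le_or_gt 0 t with ht | ht
  · simp only [g_of_nonneg hs, g_of_nonneg ht,
      integral_indicator_prod γ measurableSet_Ioi measurableSet_Ioi,
      integral_indicator_prod χ measurableSet_Ioi measurableSet_Ioi]
    linarith
  · simp only [g_of_nonneg hs, g_of_neg ht, mul_neg, integral_neg,
      integral_indicator_prod γ measurableSet_Ioi measurableSet_Iic,
      integral_indicator_prod χ measurableSet_Ioi measurableSet_Iic]
    linarith
  · simp only [g_of_neg hs, g_of_nonneg ht, neg_mul, integral_neg,
      integral_indicator_prod γ measurableSet_Iic measurableSet_Ioi,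
      integral_indicator_prod χ measurableSet_Iic measurableSet_Ioi]
    linarith
  · simp only [g_of_neg hs, g_of_neg ht, neg_mul, mul_neg, neg_neg,
      integral_indicator_prod γ measurableSet_Iic measurableSet_Iic,
      integral_indicator_prod χ measurableSet_Iic measurableSet_Iic]
    linarith

/-! ### Fubini representation -/

lemma H_integrable (γ : Measure (ℝ × ℝ)) [IsProbabilityMeasure γ]
    (hint : Integrable (fun p : ℝ × ℝ => |p.1| * |p.2|) γ) :
    Integrable (fun q : (ℝ × ℝ) × (ℝ × ℝ) => g q.1.1 q.2.1 * g q.1.2 q.2.2)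
      (γ.prod (volume.prod volume)) := by
  have hmeas : Measurable (fun q : (ℝ × ℝ) × (ℝ × ℝ) => g q.1.1 q.2.1 * g q.1.2 q.2.2) := by
    have m1 : Measurable (fun q : (ℝ × ℝ) × (ℝ × ℝ) => g q.1.1 q.2.1) :=
      measurable_g2.comp ((measurable_fst.comp measurable_fst).prodMk
        (measurable_fst.comp measurable_snd))
    have m2 : Measurable (fun q : (ℝ × ℝ) × (ℝ × ℝ) => g q.1.2 q.2.2) :=
      measurable_g2.comp ((measurable_snd.comp measurable_fst).prodMk
        (measurable_snd.comp measurable_snd))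
    exact m1.mul m2
  rw [integrable_prod_iff hmeas.aestronglyMeasurable]
  constructor
  · refine Filter.Eventually.of_forall (fun p => ?_)
    exact (integrable_g p.1).mul_prod (integrable_g p.2)
  · have hcalc : ∀ p : ℝ × ℝ,
        (∫ z : ℝ × ℝ, ‖g p.1 z.1 * g p.2 z.2‖ ∂(volume.prod volume)) = |p.1| * |p.2| := by
      intro p
      have : ∀ z : ℝ × ℝ, ‖g p.1 z.1 * g p.2 z.2‖ = |g p.1 z.1| * |g p.2 z.2| := fun z => by
        rw [Real.norm_eq_abs, abs_mul]
      simp only [this]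
      rw [integral_prod_mul (fun a => |g p.1 a|) (fun b => |g p.2 b|), integral_abs_g,
        integral_abs_g]
    simp only [hcalc]
    exact hint

lemma integral_mul_repr (γ : Measure (ℝ × ℝ)) [IsProbabilityMeasure γ]
    (hint : Integrable (fun p : ℝ × ℝ => |p.1| * |p.2|) γ) :
    ∫ p, p.1 * p.2 ∂γ
      = ∫ z : ℝ × ℝ, (∫ p : ℝ × ℝ, g p.1 z.1 * g p.2 z.2 ∂γ) ∂(volume.prod volume) := by
  have hH := H_integrable γ hint
  have step1 : ∫ p, p.1 * p.2 ∂γ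
      = ∫ p : ℝ × ℝ, (∫ z : ℝ × ℝ, g p.1 z.1 * g p.2 z.2 ∂(volume.prod volume)) ∂γ := by
    refine integral_congr_ae (Filter.Eventually.of_forall (fun p => ?_))
    show p.1 * p.2 = ∫ z : ℝ × ℝ, g p.1 z.1 * g p.2 z.2 ∂(volume.prod volume)
    rw [integral_prod_mul (fun a => g p.1 a) (fun b => g p.2 b), integral_g, integral_g]
  rw [step1]
  exact integral_integral_swap hH

lemma integrable_inner (γ : Measure (ℝ × ℝ)) [IsProbabilityMeasure γ]
    (hint : Integrable (fun p : ℝ × ℝ => |p.1| * |p.2|) γ) :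
    Integrable (fun z : ℝ × ℝ => ∫ p : ℝ × ℝ, g p.1 z.1 * g p.2 z.2 ∂γ)
      (volume.prod volume) :=
  (H_integrable γ hint).integral_prod_right

end MonoCoupling

open MonoCoupling Set Filter in
theorem monotone_coupling_maximizes_correlation
    (μ₁ μ₂ : Measure ℝ) [IsProbabilityMeasure μ₁] [IsProbabilityMeasure μ₂]
    (h₁ : Integrable (fun x => x ^ 2) μ₁) (h₂ : Integrable (fun x => x ^ 2) μ₂) :
    ∀ γ : Measure (ℝ × ℝ), IsProbabilityMeasure γ →
      Measure.map Prod.fst γ = μ₁ → Measure.map Prod.snd γ = μ₂ →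
      ∫ p, p.1 * p.2 ∂γ ≤
        ∫ u in Set.Icc (0 : ℝ) 1, quantile μ₁ u * quantile μ₂ u := by
  intro γ hγ hfst hsnd
  haveI := hγ
  -- absolute-moment integrability for any coupling of μ₁, μ₂
  have habs : ∀ m : Measure (ℝ × ℝ), IsProbabilityMeasure m →
      m.map Prod.fst = μ₁ → m.map Prod.snd = μ₂ →
      Integrable (fun p : ℝ × ℝ => |p.1| * |p.2|) m := by
    intro m hm hf hs
    haveI := hm
    have hi1 : Integrable (fun p : ℝ × ℝ => p.1 ^ 2) m := by
      have := (integrable_map_measure (f := Prod.fst) (g := fun x : ℝ => x ^ 2)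
        (by rw [hf]; exact h₁.1) measurable_fst.aemeasurable).1 (by rw [hf]; exact h₁)
      exact this
    have hi2 : Integrable (fun p : ℝ × ℝ => p.2 ^ 2) m := by
      have := (integrable_map_measure (f := Prod.snd) (g := fun x : ℝ => x ^ 2)
        (by rw [hs]; exact h₂.1) measurable_snd.aemeasurable).1 (by rw [hs]; exact h₂)
      exact this
    have hsum : Integrable (fun p : ℝ × ℝ => (p.1 ^ 2 + p.2 ^ 2) / 2) m :=
      (hi1.add hi2).div_const 2
    refine hsum.mono' ((measurable_fst.abs.mul measurable_snd.abs).aestronglyMeasurable) ?_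
    refine Filter.Eventually.of_forall fun p => ?_
    rw [Real.norm_eq_abs, abs_mul, abs_abs, abs_abs]
    nlinarith [sq_nonneg (|p.1| - |p.2|), sq_abs p.1, sq_abs p.2]
  have hγabs := habs γ hγ hfst hsnd
  -- the monotone coupling
  have hq₁ := aemeasurable_quantile μ₁
  have hq₂ := aemeasurable_quantile μ₂
  have hpair : AEMeasurable (fun u => (quantile μ₁ u, quantile μ₂ u)) nu := hq₁.prodMk hq₂
  set χ : Measure (ℝ × ℝ) := nu.map (fun u => (quantile μ₁ u, quantile μ₂ u)) with hχ
  haveI hχprob : IsProbabilityMeasure χ := Measure.isProbabilityMeasure_map hpair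
  have hχfst : χ.map Prod.fst = μ₁ := by
    rw [hχ, AEMeasurable.map_map_of_aemeasurable measurable_fst.aemeasurable hpair]
    exact map_quantile μ₁
  have hχsnd : χ.map Prod.snd = μ₂ := by
    rw [hχ, AEMeasurable.map_map_of_aemeasurable measurable_snd.aemeasurable hpair]
    exact map_quantile μ₂
  have hχabs := habs χ hχprob hχfst hχsnd
  -- Fréchet upper bound: χ dominates on lower-left boxes
  have hIic : ∀ s t : ℝ, γ (Iic s ×ˢ Iic t) ≤ χ (Iic s ×ˢ Iic t) := by
    intro s t
    have hbox : χ (Iic s ×ˢ Iic t) = nu {u | quantile μ₁ u ≤ s ∧ quantile μ₂ u ≤ t} := by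
      rw [hχ, Measure.map_apply_of_aemeasurable hpair
        (measurableSet_Iic.prod measurableSet_Iic)]
      rfl
    have hcong : {u | quantile μ₁ u ≤ s ∧ quantile μ₂ u ≤ t}
        =ᵐ[nu] Iic (min (F μ₁ s) (F μ₂ t)) := by
      rw [Filter.eventuallyEq_set]
      filter_upwards [ae_Ioo] with u hu
      simp only [mem_setOf_eq, mem_Iic, le_min_iff]
      exact and_congr (quantile_le_iff μ₁ hu.1 hu.2) (quantile_le_iff μ₂ hu.1 hu.2)
    have hm0 : 0 ≤ min (F μ₁ s) (F μ₂ t) := le_min (F_nonneg _ _) (F_nonneg _ _)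
    have hm1 : min (F μ₁ s) (F μ₂ t) ≤ 1 := min_le_of_left_le (F_le_one μ₁ s)
    have hval : nu (Iic (min (F μ₁ s) (F μ₂ t))) = ENNReal.ofReal (min (F μ₁ s) (F μ₂ t)) := by
      rw [nu, Measure.restrict_apply' measurableSet_Icc]
      have : Iic (min (F μ₁ s) (F μ₂ t)) ∩ Icc 0 1 = Icc 0 (min (F μ₁ s) (F μ₂ t)) := by
        ext x
        simp only [mem_inter_iff, mem_Iic, mem_Icc]
        exact ⟨fun ⟨a, b, _⟩ => ⟨b, a⟩, fun ⟨a, b⟩ => ⟨b, a, le_trans b hm1⟩⟩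
      rw [this, Real.volume_Icc, sub_zero]
    rw [hbox, measure_congr hcong, hval]
    rcases min_cases (F μ₁ s) (F μ₂ t) with ⟨hmin, _⟩ | ⟨hmin, _⟩
    · rw [hmin, ofReal_F]
      calc γ (Iic s ×ˢ Iic t) ≤ γ (Prod.fst ⁻¹' Iic s) :=
            measure_mono (fun p hp => hp.1)
        _ = μ₁ (Iic s) := by
            rw [← Measure.map_apply measurable_fst measurableSet_Iic, hfst]
    · rw [hmin, ofReal_F]
      calc γ (Iic s ×ˢ Iic t) ≤ γ (Prod.snd ⁻¹' Iic t) :=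
            measure_mono (fun p hp => hp.2)
        _ = μ₂ (Iic t) := by
            rw [← Measure.map_apply measurable_snd measurableSet_Iic, hsnd]
  -- compare the double integrals
  have hcmp : ∫ p, p.1 * p.2 ∂γ ≤ ∫ p, p.1 * p.2 ∂χ := by
    rw [integral_mul_repr γ hγabs, integral_mul_repr χ hχabs]
    exact integral_mono (integrable_inner γ hγabs) (integrable_inner χ hχabs)
      (quadrant_le γ χ (by rw [hfst, hχfst]) (by rw [hsnd, hχsnd]) hIic)
  refine le_trans hcmp ?_
  have : ∫ p, p.1 * p.2 ∂χ = ∫ u, quantile μ₁ u * quantile μ₂ u ∂nu := by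
    rw [hχ, integral_map (f := fun p : ℝ × ℝ => p.1 * p.2) hpair (continuous_fst.mul continuous_snd).aestronglyMeasurable]
  rw [this]
  rfl
end
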